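/- arXiv:2401.10346 — 7 statements merged into one kernel-verified Lean document; each statement's English description precedes it below -/
import Mathlib

section
/- Let x̄ ∈ Φ⁻¹(int(dom f)) ∩ dom g be an optimal solution of the problem min_{x∈X} f(Φx) + g(x), and set ȳ := −Φ*∇f(Φx̄) (so that ȳ ∈ ∂g(x̄)). Then x̄ is the unique optimal solution of this problem if and only if Ker Φ ∩ R_{∂g*(ȳ)}(x̄) = {0}. -/
open Filter Set

/-- The radial cone `R_Ω(x) = ℝ₊ (Ω − x)` of a set `Ω` at a point `x`. -/
def radialCone {M : Type*} [AddCommGroup M] [Module ℝ M] (Ω : Set M) (x : M) : Set M :=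
  {w | ∃ t : ℝ, 0 ≤ t ∧ ∃ z ∈ Ω, w = t • (z - x)}

/-- Subdifferential of an extended-real-valued convex function encoded by its domain `domg`
and real values `g` on the domain: `∂g(x) = {v | g(z) − g(x) ≥ ⟨v, z − x⟩ ∀ z}`
(the inequality is automatic outside the domain, where `g = +∞`). -/
def subdiffD {X : Type*} [NormedAddCommGroup X] [InnerProductSpace ℝ X]
    (domg : Set X) (g : X → ℝ) (x : X) : Set X :=
  {v | x ∈ domg ∧ ∀ z ∈ domg, (inner ℝ v (z - x) : ℝ) ≤ g z - g x}

lemma strict_aux {Y : Type*} [NormedAddCommGroup Y] [InnerProductSpace ℝ Y]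
    [FiniteDimensional ℝ Y]
    {U : Set Y} (hU : IsOpen U) {f : Y → ℝ}
    (hf : ContDiffOn ℝ 2 f U)
    (hpos : ∀ y ∈ U, ∀ w : Y, w ≠ 0 → 0 < (inner ℝ ((fderiv ℝ (gradient f) y) w) w : ℝ))
    {y0 v : Y} (hv : v ≠ 0) {c : ℝ}
    (hmem : ∀ t ∈ Set.Ico (0:ℝ) 1, y0 + t • v ∈ U)
    (heq : ∀ t ∈ Set.Ico (0:ℝ) 1, f (y0 + t • v) = f y0 + t * c) : False := by
  set γ : ℝ → Y := fun t => y0 + t • v with hγ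
  have hγd : ∀ t : ℝ, HasDerivAt γ v t := by
    intro t
    simpa [hγ] using ((hasDerivAt_id t).smul_const v).const_add y0
  have hfd1 : ContDiffOn ℝ 1 (fderiv ℝ f) U := hf.fderiv_of_isOpen hU (by norm_num)
  have hgradd : DifferentiableOn ℝ (gradient f) U := by
    have : ContDiffOn ℝ 1 (gradient f) U := by
      have := ((InnerProductSpace.toDual ℝ Y).symm.contDiff (n := 1)).comp_contDiffOn hfd1
      exact this
    exact this.differentiableOn one_ne_zero
  have hfdiff : DifferentiableOn ℝ f U := hf.differentiableOn (by norm_num)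
  set ψ : ℝ → ℝ := fun t => (inner ℝ (gradient f (γ t)) v : ℝ) with hψ
  have hψc : ∀ t ∈ Set.Ioo (0:ℝ) 1, ψ t = c := by
    intro t ht
    have htU : γ t ∈ U := hmem t ⟨ht.1.le, ht.2⟩
    have hfy : HasFDerivAt f (fderiv ℝ f (γ t)) (γ t) :=
      ((hfdiff (γ t) htU).differentiableAt (hU.mem_nhds htU)).hasFDerivAt
    have hcomp : HasDerivAt (fun s => f (γ s)) (fderiv ℝ f (γ t) v) t :=
      hfy.comp_hasDerivAt t (hγd t)
    have h1 : fderiv ℝ f (γ t) v = ψ t := by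
      rw [hψ]
      have : fderiv ℝ f (γ t) = InnerProductSpace.toDual ℝ Y (gradient f (γ t)) := by
        rw [gradient, (InnerProductSpace.toDual ℝ Y).apply_symm_apply]
      rw [this, InnerProductSpace.toDual_apply_apply]
    have haff : HasDerivAt (fun s => f (γ s)) c t := by
      have hev : (fun s => f (γ s)) =ᶠ[nhds t] (fun s => f y0 + s * c) := by
        filter_upwards [Ioo_mem_nhds ht.1 ht.2] with s hs
        exact heq s ⟨hs.1.le, hs.2⟩
      have : HasDerivAt (fun s : ℝ => f y0 + s * c) c t := by
        simpa using ((hasDerivAt_id t).mul_const c).const_add (f y0)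
      exact this.congr_of_eventuallyEq hev
    rw [← h1]
    exact hcomp.unique haff
  have hhalf : (1/2 : ℝ) ∈ Set.Ioo (0:ℝ) 1 := by norm_num
  have hU2 : γ (1/2) ∈ U := hmem _ ⟨by norm_num, by norm_num⟩
  have hgy : HasFDerivAt (gradient f) (fderiv ℝ (gradient f) (γ (1/2))) (γ (1/2)) :=
    ((hgradd _ hU2).differentiableAt (hU.mem_nhds hU2)).hasFDerivAt
  have hgc : HasDerivAt (fun s => gradient f (γ s)) (fderiv ℝ (gradient f) (γ (1/2)) v) (1/2) :=
    hgy.comp_hasDerivAt _ (hγd _)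
  have hψd : HasDerivAt ψ
      ((inner ℝ (gradient f (γ (1/2))) (0:Y) : ℝ) +
        inner ℝ (fderiv ℝ (gradient f) (γ (1/2)) v) v) (1/2) :=
    hgc.inner ℝ (hasDerivAt_const _ v)
  have hψ0 : HasDerivAt ψ 0 (1/2) := by
    have hev : ψ =ᶠ[nhds (1/2 : ℝ)] (fun _ => c) := by
      filter_upwards [Ioo_mem_nhds hhalf.1 hhalf.2] with s hs
      exact hψc s hs
    exact (hasDerivAt_const _ c).congr_of_eventuallyEq hev
  have := hψd.unique hψ0
  have hp := hpos _ hU2 v hv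
  rw [inner_zero_right] at this
  linarith

/-- **Theorem (Solution uniqueness via the radial cone).**
Let `f` be a proper l.s.c. convex function (encoded by `domf` and its real values `f`),
twice continuously differentiable on `int (dom f)` with positive definite Hessian there,
`g` a proper l.s.c. convex function (encoded by `domg`, `g`), and
`x̄ ∈ Φ⁻¹(int (dom f)) ∩ dom g` an optimal solution of `min f(Φx) + g(x)`, with
`ȳ = −Φ*∇f(Φx̄) ∈ ∂g(x̄)`.  Then `x̄` is the unique optimal solution if and only if
`Ker Φ ∩ R_{∂g*(ȳ)}(x̄) = {0}`. -/
theorem solution_uniqueness_via_radial_cone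
    {X Y : Type*} [NormedAddCommGroup X] [InnerProductSpace ℝ X] [FiniteDimensional ℝ X]
    [NormedAddCommGroup Y] [InnerProductSpace ℝ Y] [FiniteDimensional ℝ Y]
    (Φ : X →ₗ[ℝ] Y) (domf : Set Y) (f : Y → ℝ) (domg : Set X) (g : X → ℝ)
    -- f is proper l.s.c. convex (closed epigraph, nonempty domain)
    (hf_conv : ConvexOn ℝ domf f)
    (hf_proper : domf.Nonempty)
    (hf_lsc : IsClosed {p : Y × ℝ | p.1 ∈ domf ∧ f p.1 ≤ p.2})
    -- f is twice continuously differentiable on int (dom f)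
    (hf_C2 : ContDiffOn ℝ 2 f (interior domf))
    -- the Hessian of f is positive definite on int (dom f)
    (hf_posdef : ∀ y ∈ interior domf, ∀ w : Y, w ≠ 0 →
      0 < (inner ℝ ((fderiv ℝ (gradient f) y) w) w : ℝ))
    -- g is proper l.s.c. convex
    (hg_conv : ConvexOn ℝ domg g)
    (hg_proper : domg.Nonempty)
    (hg_lsc : IsClosed {p : X × ℝ | p.1 ∈ domg ∧ g p.1 ≤ p.2})
    -- standing assumption Φ⁻¹(int dom f) ∩ dom g ≠ ∅
    (hfeas : (Φ ⁻¹' (interior domf) ∩ domg).Nonempty)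
    -- x̄ ∈ Φ⁻¹(int dom f) ∩ dom g is an optimal solution
    (xb : X) (hxb : xb ∈ Φ ⁻¹' (interior domf) ∩ domg)
    (hopt : ∀ x, Φ x ∈ domf → x ∈ domg → f (Φ xb) + g xb ≤ f (Φ x) + g x)
    -- ȳ := −Φ*∇f(Φx̄), and ȳ ∈ ∂g(x̄)
    (yb : X) (hyb : yb = - (LinearMap.adjoint Φ) (gradient f (Φ xb)))
    (hyb_sub : yb ∈ subdiffD domg g xb) :
    (∀ x, x ≠ xb → Φ x ∈ domf → x ∈ domg → f (Φ xb) + g xb < f (Φ x) + g x) ↔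
      (LinearMap.ker Φ : Set X) ∩ radialCone {x | yb ∈ subdiffD domg g x} xb = {0} := by
  -- key orthogonality: yb ⊥ ker Φ
  have horth : ∀ u : X, Φ u = 0 → (inner ℝ yb u : ℝ) = 0 := by
    intro u hu
    rw [hyb, inner_neg_left, LinearMap.adjoint_inner_left, hu, inner_zero_right, neg_zero]
  constructor
  · -- uniqueness ⇒ intersection = {0}
    intro huniq
    apply Set.eq_singleton_iff_unique_mem.mpr
    constructor
    · exact ⟨by simp, 0, le_rfl, xb, hyb_sub, by simp⟩
    · rintro w ⟨hwker, t, ht, z, hz, rfl⟩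
      by_contra hne
      have htpos : 0 < t := by
        rcases ht.lt_or_eq with h | h
        · exact h
        · exact absurd (by rw [← h, zero_smul]) hne
      have hzxb : z - xb ≠ 0 := by
        intro h; exact hne (by rw [h, smul_zero])
      have hker : Φ (z - xb) = 0 := by
        have : Φ (t • (z - xb)) = 0 := by
          simpa [SetLike.mem_coe, LinearMap.mem_ker] using hwker
        have h2 : t • Φ (z - xb) = 0 := by rw [← map_smul]; exact this
        exact (smul_eq_zero.mp h2).resolve_left (ne_of_gt htpos)
      have hΦz : Φ z = Φ xb := by
        have := hker; rw [map_sub, sub_eq_zero] at this; exact this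
      obtain ⟨hzg, hzsub⟩ := hz
      obtain ⟨hxbg, hxbsub⟩ := hyb_sub
      have h1 : (inner ℝ yb (z - xb) : ℝ) = 0 := horth _ hker
      have h2 : (inner ℝ yb (xb - z) : ℝ) = 0 := by
        rw [← neg_sub, inner_neg_right, h1, neg_zero]
      have hgz : g z = g xb := by
        have a1 := hxbsub z hzg
        have a2 := hzsub xb hxbg
        rw [h1] at a1; rw [h2] at a2; linarith
      have hzne : z ≠ xb := fun h => hzxb (by rw [h, sub_self])
      have := huniq z hzne (by rw [hΦz]; exact interior_subset hxb.1) hzg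
      rw [hΦz, hgz] at this
      exact lt_irrefl _ this
  · -- intersection = {0} ⇒ uniqueness
    intro hK x hne hxf hxg
    by_contra hlt
    push_neg at hlt
    have heqv : f (Φ x) + g x = f (Φ xb) + g xb :=
      le_antisymm hlt (hopt x hxf hxg)
    have hΦxb : Φ xb ∈ interior domf := hxb.1
    -- equality of f along the segment
    have hfEq : ∀ t ∈ Set.Ico (0:ℝ) 1,
        f ((1-t) • Φ xb + t • Φ x) = (1-t) * f (Φ xb) + t * f (Φ x) := by
      intro t ht
      have ht0 : (0:ℝ) ≤ t := ht.1
      have ht1 : (0:ℝ) < 1 - t := by linarith [ht.2]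
      have hxt : (1-t) • xb + t • x ∈ domg :=
        hg_conv.1 hxb.2 hxg ht1.le ht0 (by ring)
      have hΦxt : Φ ((1-t) • xb + t • x) = (1-t) • Φ xb + t • Φ x := by
        simp [map_add, map_smul]
      have hmemf : (1-t) • Φ xb + t • Φ x ∈ interior domf :=
        Convex.combo_interior_closure_mem_interior hf_conv.1 hΦxb
          (subset_closure hxf) ht1 ht0 (by ring)
      have cf : f ((1-t) • Φ xb + t • Φ x) ≤ (1-t) * f (Φ xb) + t * f (Φ x) :=
        hf_conv.2 (interior_subset hΦxb) hxf ht1.le ht0 (by ring)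
      have cg : g ((1-t) • xb + t • x) ≤ (1-t) * g xb + t * g x :=
        hg_conv.2 hxb.2 hxg ht1.le ht0 (by ring)
      have ho := hopt ((1-t) • xb + t • x) (by rw [hΦxt]; exact interior_subset hmemf) hxt
      rw [hΦxt] at ho
      nlinarith [ho, cf, cg, heqv]
    by_cases hΦ : Φ x = Φ xb
    · -- x - xb ∈ ker Φ ∩ radial cone, nonzero: contradiction with hK
      have hgx : g x = g xb := by
        rw [hΦ] at heqv; linarith
      have hxS : yb ∈ subdiffD domg g x := by
        refine ⟨hxg, fun z hz => ?_⟩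
        obtain ⟨hxbg, hxbsub⟩ := hyb_sub
        have h0 : (inner ℝ yb (xb - x) : ℝ) = 0 := by
          apply horth
          rw [map_sub, hΦ, sub_self]
        have : (inner ℝ yb (z - x) : ℝ) = inner ℝ yb (z - xb) + inner ℝ yb (xb - x) := by
          rw [← inner_add_right, sub_add_sub_cancel]
        rw [this, h0, add_zero, hgx]
        exact hxbsub z hz
      have hwmem : x - xb ∈ (LinearMap.ker Φ : Set X) ∩
          radialCone {x | yb ∈ subdiffD domg g x} xb := by
        constructor
        · simp only [SetLike.mem_coe, LinearMap.mem_ker, map_sub, hΦ, sub_self]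
        · exact ⟨1, zero_le_one, x, hxS, by rw [one_smul]⟩
      rw [hK] at hwmem
      exact hne (by rwa [Set.mem_singleton_iff, sub_eq_zero] at hwmem)
    · -- Φ x ≠ Φ xb : contradiction with strict convexity of f
      refine strict_aux isOpen_interior hf_C2 hf_posdef
        (sub_ne_zero.mpr hΦ) (y0 := Φ xb) (c := f (Φ x) - f (Φ xb)) ?_ ?_
      · intro t ht
        have : Φ xb + t • (Φ x - Φ xb) = (1-t) • Φ xb + t • Φ x := by
          rw [smul_sub, sub_smul, one_smul]; abel
        rw [this]
        exact Convex.combo_interior_closure_mem_interior hf_conv.1 hΦxb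
          (subset_closure hxf) (by linarith [ht.2]) ht.1 (by ring)
      · intro t ht
        have h1 : Φ xb + t • (Φ x - Φ xb) = (1-t) • Φ xb + t • Φ x := by
          rw [smul_sub, sub_smul, one_smul]; abel
        rw [h1, hfEq t ht]; ring
end

section
/- Let x̄ ∈ Φ⁻¹(int(dom f)) ∩ dom g be an optimal solution of the problem min_{x∈X} f(Φx) + g(x), set ȳ := −Φ*∇f(Φx̄), and suppose that g satisfies the quadratic growth condition at x̄ for ȳ and that the radial cone R_{∂g*(ȳ)}(x̄) is closed. Then x̄ is a strong solution of the problem if and only if it is the unique optimal solution. -/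
open Filter Set

/-- Slope along a ray tends to the directional derivative. -/
lemma slope_tendsto_dir {Y : Type*} [NormedAddCommGroup Y] [NormedSpace ℝ Y]
    {f : Y → ℝ} {y₀ : Y} {D : Y →L[ℝ] ℝ} (hf : HasFDerivAt f D y₀) (v : Y) :
    Tendsto (fun t : ℝ => (f (y₀ + t • v) - f y₀) / t) (nhdsWithin 0 (Set.Ioi 0)) (nhds (D v)) := by
  have h1 : HasDerivAt (fun t : ℝ => t • v + y₀) v 0 := by
    simpa using ((hasDerivAt_id (0:ℝ)).smul_const v).add_const y₀
  have hf' : HasFDerivAt f D ((0:ℝ) • v + y₀) := by simpa using hf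
  have h2 : HasDerivAt (fun t : ℝ => f (t • v + y₀)) (D v) 0 :=
    HasFDerivAt.comp_hasDerivAt 0 hf' h1
  have h3 := hasDerivAt_iff_tendsto_slope.mp h2
  have h4 : Tendsto (slope (fun t : ℝ => f (t • v + y₀)) 0) (nhdsWithin 0 (Set.Ioi 0)) (nhds (D v)) :=
    h3.mono_left (nhdsWithin_mono 0 (fun x hx => ne_of_gt hx))
  refine h4.congr (fun t => ?_)
  simp [slope_def_field, div_eq_inv_mul, add_comm]


lemma local_strong_convexity {Y : Type*} [NormedAddCommGroup Y] [InnerProductSpace ℝ Y]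
    [FiniteDimensional ℝ Y] {O : Set Y} (hO : IsOpen O) {f : Y → ℝ}
    (hf : ContDiffOn ℝ 2 f O)
    (hpos : ∀ y ∈ O, ∀ w : Y, w ≠ 0 → 0 < (inner ℝ ((fderiv ℝ (gradient f) y) w) w : ℝ))
    {y₀ : Y} (hy₀ : y₀ ∈ O) :
    ∃ c > (0:ℝ), ∃ r > (0:ℝ), ∀ u : Y, ‖u‖ ≤ r →
      f y₀ + fderiv ℝ f y₀ u + c * ‖u‖ ^ 2 ≤ f (y₀ + u) := by
  classical
  -- trivial case of a subsingleton space
  rcases subsingleton_or_nontrivial Y with hY | hY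
  · refine ⟨1, one_pos, 1, one_pos, fun u _ => ?_⟩
    have hu0 : u = 0 := Subsingleton.elim u 0
    simp [hu0]
  -- radius with closed ball inside O
  obtain ⟨r₀, hr₀, hball⟩ := Metric.isOpen_iff.mp hO y₀ hy₀
  set r : ℝ := r₀ / 2 with hr_def
  have hr : 0 < r := by positivity
  have hcb : Metric.closedBall y₀ r ⊆ O := by
    refine subset_trans ?_ hball
    intro z hz
    have : dist z y₀ ≤ r := hz
    have : dist z y₀ < r₀ := lt_of_le_of_lt this (by simp [hr_def]; linarith)
    exact this
  -- regularity of the derivative and the gradient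
  have hf1 : ContDiffOn ℝ 1 (fderiv ℝ f) O := hf.fderiv_of_isOpen hO (by norm_num)
  have hgrad_eq : gradient f = fun y => (InnerProductSpace.toDual ℝ Y).symm (fderiv ℝ f y) :=
    funext fun y => rfl
  have hgrad1 : ContDiffOn ℝ 1 (gradient f) O := by
    rw [hgrad_eq]
    exact (((InnerProductSpace.toDual ℝ Y).symm.contDiff).of_le le_top).comp_contDiffOn hf1
  have hH : ContinuousOn (fderiv ℝ (gradient f)) O :=
    (hgrad1.fderiv_of_isOpen (m := 0) hO (by norm_num)).continuousOn
  have hgraddiff : DifferentiableOn ℝ (gradient f) O := hgrad1.differentiableOn one_ne_zero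
  have hfdiff : DifferentiableOn ℝ f O := hf.differentiableOn (by norm_num)
  -- compact minimization of the Hessian quadratic form
  set K : Set (Y × Y) := (Metric.closedBall y₀ r) ×ˢ (Metric.sphere (0:Y) 1) with hK_def
  have hKc : IsCompact K :=
    (isCompact_closedBall y₀ r).prod (isCompact_sphere (0:Y) 1)
  have hKne : K.Nonempty := by
    obtain ⟨w, hw⟩ := NormedSpace.sphere_nonempty (x := (0:Y)) (r := 1) |>.mpr zero_le_one
    exact ⟨(y₀, w), Set.mem_prod.mpr ⟨by simp [hr.le], hw⟩⟩
  set Q : Y × Y → ℝ := fun p => inner ℝ ((fderiv ℝ (gradient f) p.1) p.2) p.2 with hQ_def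
  have hQc : ContinuousOn Q K := by
    have h1 : ContinuousOn (fun p : Y × Y => fderiv ℝ (gradient f) p.1) K := by
      refine hH.comp continuousOn_fst ?_
      intro p hp
      exact hcb (Set.mem_prod.mp hp).1
    have h2 : ContinuousOn (fun p : Y × Y => (fderiv ℝ (gradient f) p.1) p.2) K :=
      h1.clm_apply continuousOn_snd
    exact h2.inner continuousOn_snd
  obtain ⟨p₀, hp₀K, hmin⟩ := hKc.exists_isMinOn hKne hQc
  set m : ℝ := Q p₀ with hm_def
  have hm : 0 < m := by
    obtain ⟨h1, h2⟩ := Set.mem_prod.mp hp₀K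
    refine hpos p₀.1 (hcb h1) p₀.2 ?_
    intro h0
    rw [h0] at h2
    simp at h2
  refine ⟨m / 2, by positivity, r, hr, fun u hu => ?_⟩
  rcases eq_or_ne u 0 with hu0 | hu0
  · simp [hu0]
  have hs : 0 < ‖u‖ := norm_pos_iff.mpr hu0
  -- points on the segment are in the ball
  have hmem : ∀ t ∈ Icc (0:ℝ) 1, y₀ + t • u ∈ Metric.closedBall y₀ r := by
    intro t ht
    have : ‖t • u‖ = t * ‖u‖ := by
      rw [norm_smul, Real.norm_of_nonneg ht.1]
    simp only [Metric.mem_closedBall, dist_eq_norm, add_sub_cancel_left]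
    rw [this]
    nlinarith [ht.1, ht.2, hs]
  have hmemO : ∀ t ∈ Icc (0:ℝ) 1, y₀ + t • u ∈ O := fun t ht => hcb (hmem t ht)
  -- derivative formulas
  have hinner_eq : ∀ y, (fderiv ℝ f y) u = (inner ℝ (gradient f y) u : ℝ) := by
    intro y
    rw [hgrad_eq]
    exact (InnerProductSpace.toDual_symm_apply).symm
  set q1 : ℝ → ℝ := fun t => (inner ℝ (gradient f (y₀ + t • u)) u : ℝ) with hq1_def
  have hline : ∀ t : ℝ, HasDerivAt (fun τ : ℝ => y₀ + τ • u) u t := by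
    intro t
    simpa using ((hasDerivAt_id t).smul_const u).const_add y₀
  have hq : ∀ t ∈ Icc (0:ℝ) 1, HasDerivAt (fun τ : ℝ => f (y₀ + τ • u)) (q1 t) t := by
    intro t ht
    have hd : DifferentiableAt ℝ f (y₀ + t • u) :=
      (hfdiff (y₀ + t • u) (hmemO t ht)).differentiableAt (hO.mem_nhds (hmemO t ht))
    have := hd.hasFDerivAt.comp_hasDerivAt t (hline t)
    rw [hq1_def]
    show HasDerivAt _ (inner ℝ (gradient f (y₀ + t • u)) u) t
    rw [← hinner_eq]
    exact this
  have hq1' : ∀ t ∈ Icc (0:ℝ) 1,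
      HasDerivAt q1 ((inner ℝ ((fderiv ℝ (gradient f) (y₀ + t • u)) u) u : ℝ)) t := by
    intro t ht
    have hd : DifferentiableAt ℝ (gradient f) (y₀ + t • u) :=
      (hgraddiff (y₀ + t • u) (hmemO t ht)).differentiableAt (hO.mem_nhds (hmemO t ht))
    have hG : HasDerivAt (fun τ : ℝ => gradient f (y₀ + τ • u))
        ((fderiv ℝ (gradient f) (y₀ + t • u)) u) t :=
      by have := hd.hasFDerivAt.comp_hasDerivAt t (hline t); exact this
    have := HasDerivAt.inner (𝕜 := ℝ) hG (hasDerivAt_const t u)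
    simpa [hq1_def] using this
  -- lower bound for the second derivative
  have hlow : ∀ t ∈ Icc (0:ℝ) 1,
      m * ‖u‖ ^ 2 ≤ (inner ℝ ((fderiv ℝ (gradient f) (y₀ + t • u)) u) u : ℝ) := by
    intro t ht
    set w : Y := ‖u‖⁻¹ • u with hw_def
    have hwnorm : ‖w‖ = 1 := by
      rw [hw_def, norm_smul]
      simp [abs_of_pos (inv_pos.mpr hs), inv_mul_cancel₀ (ne_of_gt hs)]
    have hwK : (y₀ + t • u, w) ∈ K := by
      exact Set.mem_prod.mpr ⟨hmem t ht, by simpa using hwnorm⟩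
    have h1 : m ≤ Q (y₀ + t • u, w) := hmin hwK
    have h2 : Q (y₀ + t • u, w)
        = ‖u‖⁻¹ * (‖u‖⁻¹ * (inner ℝ ((fderiv ℝ (gradient f) (y₀ + t • u)) u) u : ℝ)) := by
      show (inner ℝ ((fderiv ℝ (gradient f) (y₀ + t • u)) (‖u‖⁻¹ • u)) (‖u‖⁻¹ • u) : ℝ) = _
      rw [map_smul, real_inner_smul_left, real_inner_smul_right]
    have h3 : (inner ℝ ((fderiv ℝ (gradient f) (y₀ + t • u)) u) u : ℝ)
        = ‖u‖ ^ 2 * Q (y₀ + t • u, w) := by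
      rw [h2]
      field_simp
    calc m * ‖u‖ ^ 2 = ‖u‖ ^ 2 * m := by ring
    _ ≤ ‖u‖ ^ 2 * Q (y₀ + t • u, w) :=
        mul_le_mul_of_nonneg_left h1 (by positivity)
    _ = (inner ℝ ((fderiv ℝ (gradient f) (y₀ + t • u)) u) u : ℝ) := h3.symm
  -- first MVT: q1 t - q1 0 ≥ m ‖u‖² t
  have hq1cont : ContinuousOn q1 (Icc 0 1) := fun t ht => ((hq1' t ht).continuousAt).continuousWithinAt
  have hq1diff : DifferentiableOn ℝ q1 (interior (Icc (0:ℝ) 1)) := by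
    intro t ht
    rw [interior_Icc] at ht
    exact ((hq1' t (Ioo_subset_Icc_self ht)).differentiableAt).differentiableWithinAt
  have hmvt1 := (convex_Icc (0:ℝ) 1).mul_sub_le_image_sub_of_le_deriv hq1cont hq1diff
    (C := m * ‖u‖ ^ 2) (fun t ht => by
      rw [interior_Icc] at ht
      rw [(hq1' t (Ioo_subset_Icc_self ht)).deriv]
      exact hlow t (Ioo_subset_Icc_self ht))
  -- second MVT: monotonicity of p
  set p : ℝ → ℝ := fun t => f (y₀ + t • u) - (q1 0 * t + m * ‖u‖ ^ 2 / 2 * t ^ 2) with hp_def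
  have hp' : ∀ t ∈ Icc (0:ℝ) 1, HasDerivAt p (q1 t - q1 0 - m * ‖u‖ ^ 2 * t) t := by
    intro t ht
    have hpoly := ((hasDerivAt_id t).const_mul (q1 0)).add
      ((hasDerivAt_pow 2 t).const_mul (m * ‖u‖ ^ 2 / 2))
    have hp2 := (hq t ht).sub hpoly
    norm_num at hp2
    have hval : q1 t - q1 0 - m * ‖u‖ ^ 2 * t = q1 t - (q1 0 + m * ‖u‖ ^ 2 / 2 * (2 * t)) := by
      ring
    rw [hval]
    exact hp2
  have hpcont : ContinuousOn p (Icc 0 1) := fun t ht => ((hp' t ht).continuousAt).continuousWithinAt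
  have hpdiff : DifferentiableOn ℝ p (interior (Icc (0:ℝ) 1)) := by
    intro t ht
    rw [interior_Icc] at ht
    exact ((hp' t (Ioo_subset_Icc_self ht)).differentiableAt).differentiableWithinAt
  have hpmono : MonotoneOn p (Icc (0:ℝ) 1) := by
    refine monotoneOn_of_deriv_nonneg (convex_Icc 0 1) hpcont hpdiff (fun t ht => ?_)
    rw [interior_Icc] at ht
    rw [(hp' t (Ioo_subset_Icc_self ht)).deriv]
    have := hmvt1 0 (by norm_num) t (Ioo_subset_Icc_self ht) ht.1.le
    linarith
  have hfin := hpmono (by norm_num : (0:ℝ) ∈ Icc (0:ℝ) 1) (by norm_num : (1:ℝ) ∈ Icc (0:ℝ) 1) zero_le_one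
  have hq10 : q1 0 = (fderiv ℝ f y₀) u := by
    rw [hq1_def]
    simp only [zero_smul, add_zero]
    exact (hinner_eq y₀).symm
  rw [hp_def] at hfin
  simp only [zero_smul, add_zero, one_smul, mul_zero, mul_one, one_pow, zero_pow, two_ne_zero] at hfin
  rw [hq10] at hfin
  nlinarith [hfin]

set_option maxHeartbeats 1600000 in
/-- **Corollary (Strong minima and solution uniqueness).**
In the setting of the composite problem `min f(Φx) + g(x)`, if `g` satisfies the quadratic
growth condition at the optimal solution `x̄` for `ȳ = −Φ*∇f(Φx̄)`, and the radial cone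
`R_{∂g*(ȳ)}(x̄)` is closed, then `x̄` is a strong solution if and only if it is the unique
optimal solution. -/
theorem strong_minima_iff_unique_solution
    {X Y : Type*} [NormedAddCommGroup X] [InnerProductSpace ℝ X] [FiniteDimensional ℝ X]
    [NormedAddCommGroup Y] [InnerProductSpace ℝ Y] [FiniteDimensional ℝ Y]
    (Φ : X →ₗ[ℝ] Y) (domf : Set Y) (f : Y → ℝ) (domg : Set X) (g : X → ℝ)
    -- f is proper l.s.c. convex
    (hf_conv : ConvexOn ℝ domf f)
    (hf_proper : domf.Nonempty)
    (hf_lsc : IsClosed {p : Y × ℝ | p.1 ∈ domf ∧ f p.1 ≤ p.2})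
    -- f is twice continuously differentiable on int (dom f)
    (hf_C2 : ContDiffOn ℝ 2 f (interior domf))
    -- the Hessian of f is positive definite on int (dom f)
    (hf_posdef : ∀ y ∈ interior domf, ∀ w : Y, w ≠ 0 →
      0 < (inner ℝ ((fderiv ℝ (gradient f) y) w) w : ℝ))
    -- g is proper l.s.c. convex
    (hg_conv : ConvexOn ℝ domg g)
    (hg_proper : domg.Nonempty)
    (hg_lsc : IsClosed {p : X × ℝ | p.1 ∈ domg ∧ g p.1 ≤ p.2})
    -- standing assumption Φ⁻¹(int dom f) ∩ dom g ≠ ∅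
    (hfeas : (Φ ⁻¹' (interior domf) ∩ domg).Nonempty)
    -- x̄ ∈ Φ⁻¹(int dom f) ∩ dom g is an optimal solution
    (xb : X) (hxb : xb ∈ Φ ⁻¹' (interior domf) ∩ domg)
    (hopt : ∀ x, Φ x ∈ domf → x ∈ domg → f (Φ xb) + g xb ≤ f (Φ x) + g x)
    -- ȳ := −Φ*∇f(Φx̄)
    (yb : X) (hyb : yb = - (LinearMap.adjoint Φ) (gradient f (Φ xb)))
    -- g satisfies the quadratic growth condition at x̄ for ȳ
    (hQG : ∃ ε > (0:ℝ), ∃ κ > (0:ℝ), ∀ x ∈ domg, ‖x - xb‖ < ε →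
      κ / 2 * (Metric.infDist x {z | yb ∈ subdiffD domg g z}) ^ 2 ≤
        g x - g xb - (inner ℝ yb (x - xb) : ℝ))
    -- the radial cone R_{∂g*(ȳ)}(x̄) is closed
    (hclosed : IsClosed (radialCone {x | yb ∈ subdiffD domg g x} xb)) :
    -- x̄ is a strong solution ↔ x̄ is the unique optimal solution
    (∃ ε > (0:ℝ), ∃ κ > (0:ℝ), ∀ x, Φ x ∈ domf → x ∈ domg → ‖x - xb‖ < ε →
        κ / 2 * ‖x - xb‖ ^ 2 ≤ f (Φ x) + g x - (f (Φ xb) + g xb)) ↔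
      (∀ x, x ≠ xb → Φ x ∈ domf → x ∈ domg → f (Φ xb) + g xb < f (Φ x) + g x) := by
  classical
  have hΦxb : Φ xb ∈ interior domf := hxb.1
  have hxbg : xb ∈ domg := hxb.2
  -- differentiability of f at Φ xb
  have hfd : DifferentiableAt ℝ f (Φ xb) :=
    ((hf_C2.differentiableOn (by norm_num)) _ hΦxb).differentiableAt
      (isOpen_interior.mem_nhds hΦxb)
  have hDgrad : ∀ v : Y, fderiv ℝ f (Φ xb) v = (inner ℝ (gradient f (Φ xb)) v : ℝ) := fun v =>
    (InnerProductSpace.toDual_symm_apply).symm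
  have hDadj : ∀ d : X, fderiv ℝ f (Φ xb) (Φ d) = -(inner ℝ yb d : ℝ) := by
    intro d
    rw [hDgrad (Φ d), hyb, inner_neg_left, LinearMap.adjoint_inner_left, neg_neg]
  -- the set S = ∂g*(ȳ)
  set S : Set X := {z | yb ∈ subdiffD domg g z} with hS_def
  -- first-order optimality: yb ∈ ∂g(xb), i.e. xb ∈ S
  have hxbS : xb ∈ S := by
    refine ⟨hxbg, fun z hz => ?_⟩
    have htend := slope_tendsto_dir hfd.hasFDerivAt (Φ (z - xb))
    have hev : ∀ᶠ t in nhdsWithin 0 (Set.Ioi 0),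
        -(g z - g xb) ≤ (f (Φ xb + t • Φ (z - xb)) - f (Φ xb)) / t := by
      have h1 : ∀ᶠ t : ℝ in nhds 0, Φ xb + t • Φ (z - xb) ∈ interior domf := by
        have hcont : Continuous fun t : ℝ => Φ xb + t • Φ (z - xb) := by continuity
        have h2 : Tendsto (fun t : ℝ => Φ xb + t • Φ (z - xb)) (nhds 0) (nhds (Φ xb)) := by
          have := hcont.tendsto 0
          simpa using this
        exact h2.eventually (isOpen_interior.mem_nhds hΦxb)
      have h2 : Set.Ioc (0:ℝ) 1 ∈ nhdsWithin 0 (Set.Ioi 0) :=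
        Ioc_mem_nhdsGT_of_mem (by constructor <;> norm_num)
      filter_upwards [h1.filter_mono nhdsWithin_le_nhds, h2] with t hmemf ht
      have ht0 : 0 < t := ht.1
      have ht1 : t ≤ 1 := ht.2
      have hxt_eq : xb + t • (z - xb) = (1 - t) • xb + t • z := by
        rw [smul_sub, sub_smul, one_smul]; abel
      have hxtg : xb + t • (z - xb) ∈ domg := by
        rw [hxt_eq]
        exact hg_conv.1 hxbg hz (by linarith) ht0.le (by ring)
      have hgxt : g (xb + t • (z - xb)) ≤ (1 - t) * g xb + t * g z := by
        rw [hxt_eq]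
        exact hg_conv.2 hxbg hz (by linarith) ht0.le (by ring)
      have hΦxt : Φ (xb + t • (z - xb)) = Φ xb + t • Φ (z - xb) := by
        rw [map_add, map_smul]
      have hopt' := hopt (xb + t • (z - xb)) (by rw [hΦxt]; exact interior_subset hmemf) hxtg
      rw [hΦxt] at hopt'
      rw [le_div_iff₀ ht0]
      linarith
    have hlim := ge_of_tendsto htend hev
    have hadj := hDadj (z - xb)
    linarith [hlim, hadj.symm.le, hadj.le]
  constructor
  · -- strong solution → unique solution
    rintro ⟨ε, hε, κ, hκ, hstrong⟩ x hxne hxf hxg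
    have hd0 : x - xb ≠ 0 := sub_ne_zero.mpr hxne
    have hdn : 0 < ‖x - xb‖ := norm_pos_iff.mpr hd0
    set t : ℝ := min (ε / (2 * ‖x - xb‖)) 2⁻¹ with ht_def
    have ht0 : 0 < t := lt_min (by positivity) (by norm_num)
    have ht1 : t ≤ 2⁻¹ := min_le_right _ _
    have htd : t * ‖x - xb‖ < ε := by
      have h1 : t ≤ ε / (2 * ‖x - xb‖) := min_le_left _ _
      have h2 : t * ‖x - xb‖ ≤ ε / (2 * ‖x - xb‖) * ‖x - xb‖ :=
        mul_le_mul_of_nonneg_right h1 hdn.le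
      have h3 : ε / (2 * ‖x - xb‖) * ‖x - xb‖ = ε / 2 := by field_simp
      rw [h3] at h2
      linarith
    have hxt_eq : xb + t • (x - xb) = (1 - t) • xb + t • x := by
      rw [smul_sub, sub_smul, one_smul]; abel
    have hxtg : xb + t • (x - xb) ∈ domg := by
      rw [hxt_eq]
      exact hg_conv.1 hxbg hxg (by linarith) ht0.le (by ring)
    have hΦxt : Φ (xb + t • (x - xb)) = (1 - t) • Φ xb + t • Φ x := by
      rw [hxt_eq, map_add, map_smul, map_smul]
    have hxtf : Φ (xb + t • (x - xb)) ∈ domf := by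
      rw [hΦxt]
      exact hf_conv.1 (interior_subset hΦxb) hxf (by linarith) ht0.le (by ring)
    have hnorm : ‖xb + t • (x - xb) - xb‖ = t * ‖x - xb‖ := by
      simp [norm_smul, abs_of_pos ht0]
    have hst := hstrong (xb + t • (x - xb)) hxtf hxtg (by rw [hnorm]; exact htd)
    rw [hnorm] at hst
    have hfub : f (Φ (xb + t • (x - xb))) ≤ (1 - t) * f (Φ xb) + t * f (Φ x) := by
      rw [hΦxt]
      exact hf_conv.2 (interior_subset hΦxb) hxf (by linarith) ht0.le (by ring)
    have hgub : g (xb + t • (x - xb)) ≤ (1 - t) * g xb + t * g x := by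
      rw [hxt_eq]
      exact hg_conv.2 hxbg hxg (by linarith) ht0.le (by ring)
    have hpos2 : 0 < κ / 2 * (t * ‖x - xb‖) ^ 2 := by positivity
    by_contra hcon
    push_neg at hcon
    have hstep : f (Φ (xb + t • (x - xb))) + g (xb + t • (x - xb)) - (f (Φ xb) + g xb)
        ≤ t * (f (Φ x) + g x - (f (Φ xb) + g xb)) := by linarith
    nlinarith [mul_nonpos_of_nonneg_of_nonpos ht0.le (sub_nonpos.mpr hcon)]
  · -- unique solution → strong solution
    intro huniq
    by_contra hns
    push_neg at hns
    obtain ⟨ε₀, hε₀, κ₀, hκ₀, hQGi⟩ := hQG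
    obtain ⟨c, hc, r, hr, hL1⟩ :=
      local_strong_convexity isOpen_interior hf_C2 hf_posdef hΦxb
    set Φ' : X →L[ℝ] Y := LinearMap.toContinuousLinearMap Φ with hΦ'_def
    have hΦ'eq : ∀ v : X, Φ' v = Φ v := fun v => rfl
    set C : ℝ := ‖Φ'‖ with hC_def
    have hCnn : 0 ≤ C := norm_nonneg _
    set ρ : ℕ → ℝ := fun n => ((n:ℝ)+1)⁻¹ with hρ_def
    have hρpos : ∀ n, 0 < ρ n := fun n => by positivity
    have hρtend : Tendsto ρ atTop (nhds 0) := by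
      simpa only [hρ_def, one_div] using (tendsto_one_div_add_atTop_nhds_zero_nat (𝕜 := ℝ))
    have hseq : ∀ n : ℕ, ∃ x, Φ x ∈ domf ∧ x ∈ domg ∧
        ‖x - xb‖ < min ε₀ (min (ρ n) (r/(C+1))) ∧
        f (Φ x) + g x - (f (Φ xb) + g xb) < ρ n / 2 * ‖x - xb‖ ^ 2 := by
      intro n
      refine hns _ ?_ _ (hρpos n)
      have := hρpos n
      positivity
    choose x hxf hxg hxlt hxineq using hseq
    have hxne : ∀ n, x n - xb ≠ 0 := by
      intro n h0
      have h0' : x n = xb := by rwa [sub_eq_zero] at h0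
      have hi := hxineq n
      rw [h0'] at hi
      simp at hi
    have hspos : ∀ n, (0:ℝ) < ‖x n - xb‖ := fun n => norm_pos_iff.mpr (hxne n)
    -- bound on ‖Φ (x n - xb)‖
    have hΦδsmall : ∀ n, ‖Φ' (x n - xb)‖ ≤ r := by
      intro n
      have h1 : ‖Φ' (x n - xb)‖ ≤ C * ‖x n - xb‖ := Φ'.le_opNorm _
      have h2 : ‖x n - xb‖ ≤ r / (C + 1) :=
        le_of_lt (lt_of_lt_of_le (hxlt n) ((min_le_right _ _).trans (min_le_right _ _)))
      have h3 : C * ‖x n - xb‖ ≤ C * (r / (C+1)) := mul_le_mul_of_nonneg_left h2 hCnn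
      have h4 : C * (r / (C+1)) ≤ r := by
        rw [mul_div_assoc']
        rw [div_le_iff₀ (by positivity)]
        nlinarith
      linarith
    -- the two bracket inequalities combined
    have hkey : ∀ n, c * ‖Φ' (x n - xb)‖^2 + κ₀/2 * (Metric.infDist (x n) S)^2
        < ρ n / 2 * ‖x n - xb‖ ^ 2 := by
      intro n
      have hb1 := hL1 (Φ' (x n - xb)) (hΦδsmall n)
      have heq1 : Φ xb + Φ' (x n - xb) = Φ (x n) := by
        rw [hΦ'eq, map_sub]; abel
      rw [heq1] at hb1
      have heq2 : fderiv ℝ f (Φ xb) (Φ' (x n - xb)) = -(inner ℝ yb (x n - xb) : ℝ) := by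
        rw [hΦ'eq]; exact hDadj _
      rw [heq2] at hb1
      have hb2 := hQGi (x n) (hxg n)
        (lt_of_lt_of_le (hxlt n) (min_le_left _ _))
      have hi := hxineq n
      linarith
    -- normalized directions
    have hwmem : ∀ n, ‖x n - xb‖⁻¹ • (x n - xb) ∈ Metric.sphere (0:X) 1 := by
      intro n
      rw [mem_sphere_zero_iff_norm, norm_smul, Real.norm_eq_abs,
        abs_of_pos (inv_pos.mpr (hspos n)), inv_mul_cancel₀ (hspos n).ne']
    obtain ⟨wL, hwLmem, σ, hσmono, hσtend⟩ :=
      (isCompact_sphere (0:X) 1).tendsto_subseq hwmem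
    -- Φ wL = 0
    have hΦw_bound : ∀ n, ‖Φ' (‖x n - xb‖⁻¹ • (x n - xb))‖ ≤ Real.sqrt (ρ n / (2 * c)) := by
      intro n
      have h1 : c * ‖Φ' (x n - xb)‖^2 < ρ n / 2 * ‖x n - xb‖ ^ 2 :=
        lt_of_le_of_lt (le_add_of_nonneg_right (by positivity)) (hkey n)
      have h2 : ‖Φ' (‖x n - xb‖⁻¹ • (x n - xb))‖ = ‖x n - xb‖⁻¹ * ‖Φ' (x n - xb)‖ := by
        rw [map_smul, norm_smul, Real.norm_eq_abs, abs_of_pos (inv_pos.mpr (hspos n))]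
      rw [h2]
      rw [Real.le_sqrt (by positivity) (by positivity)]
      rw [mul_pow]
      have h3 : ‖Φ' (x n - xb)‖^2 ≤ ‖x n - xb‖^2 * ρ n / (2*c) := by
        rw [le_div_iff₀ (by positivity : (0:ℝ) < 2*c)]
        nlinarith [h1]
      have h4 : ‖x n - xb‖⁻¹ ^ 2 * ‖Φ' (x n - xb)‖ ^ 2
          ≤ ‖x n - xb‖⁻¹ ^ 2 * (‖x n - xb‖^2 * ρ n / (2*c)) :=
        mul_le_mul_of_nonneg_left h3 (by positivity)
      have h5 : ‖x n - xb‖⁻¹ ^ 2 * (‖x n - xb‖^2 * ρ n / (2*c)) = ρ n / (2*c) := by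
        field_simp [(hspos n).ne', hc.ne']
      linarith
    have hbound_tend : Tendsto (fun n => Real.sqrt (ρ n / (2 * c))) atTop (nhds 0) := by
      have h1 : Tendsto (fun n => ρ n / (2 * c)) atTop (nhds 0) := by
        simpa using hρtend.div_const (2 * c)
      simpa using h1.sqrt
    have hΦwtend : Tendsto (fun n => Φ' (‖x n - xb‖⁻¹ • (x n - xb))) atTop (nhds 0) :=
      squeeze_zero_norm hΦw_bound hbound_tend
    have hPhiwL : Φ' wL = 0 := by
      have ha : Tendsto (fun k => Φ' (‖x (σ k) - xb‖⁻¹ • (x (σ k) - xb))) atTop (nhds (Φ' wL)) :=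
        (Φ'.continuous.tendsto wL).comp hσtend
      have hb : Tendsto (fun k => Φ' (‖x (σ k) - xb‖⁻¹ • (x (σ k) - xb))) atTop (nhds 0) :=
        hΦwtend.comp hσmono.tendsto_atTop
      exact tendsto_nhds_unique ha hb
    -- projections onto S
    have hSne : S.Nonempty := ⟨xb, hxbS⟩
    have hdist_bound : ∀ n, Metric.infDist (x n) S ≤ ‖x n - xb‖ * Real.sqrt (ρ n / κ₀) := by
      intro n
      have h1 : κ₀/2 * (Metric.infDist (x n) S)^2 < ρ n / 2 * ‖x n - xb‖ ^ 2 :=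
        lt_of_le_of_lt (le_add_of_nonneg_left (by positivity)) (hkey n)
      have h2 : (Metric.infDist (x n) S)^2 ≤ ‖x n - xb‖^2 * (ρ n / κ₀) := by
        rw [mul_div_assoc', le_div_iff₀ hκ₀]
        nlinarith [h1]
      have h3 : Metric.infDist (x n) S = Real.sqrt ((Metric.infDist (x n) S)^2) :=
        (Real.sqrt_sq Metric.infDist_nonneg).symm
      rw [h3]
      have h4 : ‖x n - xb‖ * Real.sqrt (ρ n / κ₀)
          = Real.sqrt (‖x n - xb‖^2 * (ρ n / κ₀)) := by
        rw [Real.sqrt_mul (by positivity), Real.sqrt_sq (by positivity)]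
      rw [h4]
      exact Real.sqrt_le_sqrt h2
    have hproj : ∀ n : ℕ, ∃ p ∈ S,
        dist (x n) p < Metric.infDist (x n) S + ‖x n - xb‖ * ρ n := by
      intro n
      refine (Metric.infDist_lt_iff hSne).mp ?_
      have : 0 < ‖x n - xb‖ * ρ n := mul_pos (hspos n) (hρpos n)
      linarith
    choose p hpS hpdist using hproj
    have hqcone : ∀ n, ‖x n - xb‖⁻¹ • (p n - xb) ∈ radialCone S xb := fun n =>
      ⟨‖x n - xb‖⁻¹, inv_nonneg.mpr (hspos n).le, p n, hpS n, rfl⟩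
    have hwq : ∀ n, ‖(‖x n - xb‖⁻¹ • (x n - xb)) - (‖x n - xb‖⁻¹ • (p n - xb))‖
        ≤ Real.sqrt (ρ n / κ₀) + ρ n := by
      intro n
      have h1 : (‖x n - xb‖⁻¹ • (x n - xb)) - (‖x n - xb‖⁻¹ • (p n - xb))
          = ‖x n - xb‖⁻¹ • (x n - p n) := by
        rw [← smul_sub]
        congr 1
        abel
      rw [h1, norm_smul, Real.norm_eq_abs, abs_of_pos (inv_pos.mpr (hspos n))]
      have h2 : ‖x n - p n‖ = dist (x n) (p n) := (dist_eq_norm _ _).symm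
      rw [h2]
      have h3 : dist (x n) (p n) ≤ ‖x n - xb‖ * Real.sqrt (ρ n / κ₀) + ‖x n - xb‖ * ρ n :=
        le_of_lt (lt_of_lt_of_le (hpdist n) (by linarith [hdist_bound n]))
      calc ‖x n - xb‖⁻¹ * dist (x n) (p n)
          ≤ ‖x n - xb‖⁻¹ * (‖x n - xb‖ * Real.sqrt (ρ n / κ₀) + ‖x n - xb‖ * ρ n) :=
            mul_le_mul_of_nonneg_left h3 (inv_pos.mpr (hspos n)).le
        _ = (‖x n - xb‖⁻¹ * ‖x n - xb‖) * (Real.sqrt (ρ n / κ₀) + ρ n) := by ring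
        _ = Real.sqrt (ρ n / κ₀) + ρ n := by
            rw [inv_mul_cancel₀ (hspos n).ne', one_mul]
    have hwq_tend : Tendsto (fun n => (‖x n - xb‖⁻¹ • (x n - xb))
        - (‖x n - xb‖⁻¹ • (p n - xb))) atTop (nhds 0) := by
      refine squeeze_zero_norm hwq ?_
      have h1 : Tendsto (fun n => ρ n / κ₀) atTop (nhds 0) := by
        simpa using hρtend.div_const κ₀
      have h2 : Tendsto (fun n => Real.sqrt (ρ n / κ₀)) atTop (nhds 0) := by
        simpa using h1.sqrt
      simpa using h2.add hρtend
    have hqtend : Tendsto (fun k => ‖x (σ k) - xb‖⁻¹ • (p (σ k) - xb)) atTop (nhds wL) := by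
      have h1 := hσtend.sub (hwq_tend.comp hσmono.tendsto_atTop)
      simp only [Function.comp] at h1 ⊢
      convert h1 using 2 with k
      · abel
      · rw [sub_zero]
    have hwLcone : wL ∈ radialCone S xb := by
      rw [← hclosed.closure_eq]
      exact mem_closure_of_tendsto hqtend (Eventually.of_forall (fun k => hqcone (σ k)))
    obtain ⟨t, ht, z, hzS, hwLeq⟩ := hwLcone
    have hwLnorm : ‖wL‖ = 1 := by
      rwa [mem_sphere_zero_iff_norm] at hwLmem
    have ht0 : t ≠ 0 := by
      rintro rfl
      rw [hwLeq] at hwLnorm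
      simp at hwLnorm
    have hzxb : z ≠ xb := by
      rintro rfl
      rw [hwLeq] at hwLnorm
      simp at hwLnorm
    have hΦzxb : Φ (z - xb) = 0 := by
      have h1 : Φ wL = 0 := by rw [← hΦ'eq]; exact hPhiwL
      rw [hwLeq, map_smul, smul_eq_zero] at h1
      exact h1.resolve_left ht0
    have hΦz : Φ z = Φ xb := by
      rw [map_sub, sub_eq_zero] at hΦzxb
      exact hΦzxb
    have hinner0 : (inner ℝ yb (z - xb) : ℝ) = 0 := by
      have h1 := hDadj (z - xb)
      rw [hΦzxb, map_zero] at h1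
      linarith
    obtain ⟨hzg, hzsub⟩ := hzS
    have hgz : g z = g xb := by
      have h1 := hxbS.2 z hzg
      have h2 := hzsub xb hxbg
      have h3 : (inner ℝ yb (xb - z) : ℝ) = 0 := by
        rw [← neg_sub, inner_neg_right, hinner0, neg_zero]
      rw [hinner0] at h1
      rw [h3] at h2
      linarith
    have hfinal := huniq z hzxb (by rw [hΦz]; exact interior_subset hΦxb) hzg
    rw [hΦz, hgz] at hfinal
    exact lt_irrefl _ hfinal
end

section
/- Fix orthogonal matrices Ū ∈ ℝ^{n1×n1}, V̄ ∈ ℝ^{n2×n2}, a linear operator Φ: ℝ^{n1×n2} → ℝ^m, and integers r ≤ p ≤ n1. Consider the problem of maximizing ½‖A‖_F² + ½‖C‖_F² over (A,B,C) ∈ S^r × ℝ^{r×(p−r)} × S₊^{p−r} subject to Φ( Ū [A BC 0; CᵀBᵀ C 0; 0 0 0] V̄ᵀ ) = 0. If (A,B,C) is feasible for this problem and (0,B,0) is a local maximizer, then A = 0 and C = 0. -/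
open Matrix Filter Set

/-- The singular values of a rectangular real matrix, in decreasing order:
the square roots of the eigenvalues of `X Xᵀ`, sorted decreasingly. -/
noncomputable def svals {a b : ℕ} (X : Matrix (Fin a) (Fin b) ℝ) : Fin a → ℝ :=
  fun i =>
    Real.sqrt ((Matrix.isHermitian_mul_conjTranspose_self X).eigenvalues
      (Tuple.sort (Matrix.isHermitian_mul_conjTranspose_self X).eigenvalues i.rev))

/-- The nuclear norm `‖X‖_* = Σᵢ σᵢ(X)`. -/
noncomputable def nuclearNorm {a b : ℕ} (X : Matrix (Fin a) (Fin b) ℝ) : ℝ :=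
  ∑ i, svals X i

/-- The spectral norm `‖X‖ = σ₁(X)`. -/
noncomputable def matSpectralNorm {a b : ℕ} (X : Matrix (Fin a) (Fin b) ℝ) : ℝ :=
  ⨆ i, svals X i

/-- The Frobenius (trace) inner product `⟨A, B⟩ = Tr(Aᵀ B)`. -/
noncomputable def finner {a b : ℕ} (A B : Matrix (Fin a) (Fin b) ℝ) : ℝ :=
  Matrix.trace (Aᵀ * B)

/-- The Frobenius norm. -/
noncomputable def frobNorm {a b : ℕ} (A : Matrix (Fin a) (Fin b) ℝ) : ℝ :=
  Real.sqrt (finner A A)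

/-- The subdifferential of the nuclear norm at `X`. -/
def nsubdiff {a b : ℕ} (X : Matrix (Fin a) (Fin b) ℝ) : Set (Matrix (Fin a) (Fin b) ℝ) :=
  {Y | ∀ Z, finner Y (Z - X) ≤ nuclearNorm Z - nuclearNorm X}

/-- `∂g*(Y) = {X : Y ∈ ∂‖X‖_*}`, the subdifferential of the conjugate of the nuclear norm. -/
def invSubdiff {a b : ℕ} (Y : Matrix (Fin a) (Fin b) ℝ) : Set (Matrix (Fin a) (Fin b) ℝ) :=
  {X | Y ∈ nsubdiff X}

/-- `O(X)`: the set of orthogonal pairs `(U, V)` such that `X = U (Diag σ(X)) Vᵀ`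
is a full ordered SVD of `X`. -/
def svdPairs {a b : ℕ} (X : Matrix (Fin a) (Fin b) ℝ) :
    Set (Matrix (Fin a) (Fin a) ℝ × Matrix (Fin b) (Fin b) ℝ) :=
  {UV | UV.1ᵀ * UV.1 = 1 ∧ UV.2ᵀ * UV.2 = 1 ∧
    X = UV.1 * (Matrix.of fun (i : Fin a) (j : Fin b) =>
      if (i : ℕ) = (j : ℕ) then svals X i else 0) * UV.2ᵀ}

/-- `p(Y) = #{i : σᵢ(Y) = 1}`. -/
noncomputable def pOne {a b : ℕ} (Y : Matrix (Fin a) (Fin b) ℝ) : ℕ :=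
  Nat.card {i : Fin a // svals Y i = 1}

/-- The `n1 × n2` block matrix `[A, D, 0; Dᵀ, C, 0; 0, 0, 0]`, where `A` occupies the
top-left `r × r` block, `D` the adjacent `r × (p − r)` block, `C` the next
`(p − r) × (p − r)` diagonal block, with zeros elsewhere. -/
def blockRect (n1 n2 r p : ℕ) (A : Matrix (Fin r) (Fin r) ℝ)
    (D : Matrix (Fin r) (Fin (p - r)) ℝ) (C : Matrix (Fin (p - r)) (Fin (p - r)) ℝ) :
    Matrix (Fin n1) (Fin n2) ℝ :=
  Matrix.of fun i j =>
    if hi : (i : ℕ) < r then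
      if hj : (j : ℕ) < r then A ⟨i, hi⟩ ⟨j, hj⟩
      else if hj2 : (j : ℕ) < p then D ⟨i, hi⟩ ⟨(j : ℕ) - r, by omega⟩
      else 0
    else if hi2 : (i : ℕ) < p then
      if hj : (j : ℕ) < r then D ⟨j, hj⟩ ⟨(i : ℕ) - r, by omega⟩
      else if hj2 : (j : ℕ) < p then C ⟨(i : ℕ) - r, by omega⟩ ⟨(j : ℕ) - r, by omega⟩
      else 0
    else 0

lemma finner_self_nonneg {a b : ℕ} (A : Matrix (Fin a) (Fin b) ℝ) : 0 ≤ finner A A := by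
  unfold finner
  simp only [Matrix.trace, Matrix.diag_apply, Matrix.mul_apply, Matrix.transpose_apply]
  exact Finset.sum_nonneg fun j _ => Finset.sum_nonneg fun i _ => mul_self_nonneg _

lemma finner_self_eq_zero {a b : ℕ} (A : Matrix (Fin a) (Fin b) ℝ)
    (h : finner A A = 0) : A = 0 := by
  unfold finner at h
  simp only [Matrix.trace, Matrix.diag_apply, Matrix.mul_apply, Matrix.transpose_apply] at h
  ext i j
  have h1 := (Finset.sum_eq_zero_iff_of_nonneg (fun j _ =>
    Finset.sum_nonneg fun i _ => mul_self_nonneg (A i j))).mp h j (Finset.mem_univ j)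
  have h2 := (Finset.sum_eq_zero_iff_of_nonneg (fun i _ =>
    mul_self_nonneg (A i j))).mp h1 i (Finset.mem_univ i)
  simpa [mul_self_eq_zero] using h2

lemma finner_smul_smul {a b : ℕ} (t : ℝ) (A : Matrix (Fin a) (Fin b) ℝ) :
    finner (t • A) (t • A) = t ^ 2 * finner A A := by
  unfold finner
  rw [Matrix.transpose_smul, Matrix.smul_mul, Matrix.mul_smul, Matrix.trace_smul,
    Matrix.trace_smul]
  simp [smul_smul]; ring

lemma frobNorm_nonneg {a b : ℕ} (A : Matrix (Fin a) (Fin b) ℝ) : 0 ≤ frobNorm A :=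
  Real.sqrt_nonneg _

lemma frobNorm_smul {a b : ℕ} (t : ℝ) (ht : 0 ≤ t) (A : Matrix (Fin a) (Fin b) ℝ) :
    frobNorm (t • A) = t * frobNorm A := by
  unfold frobNorm
  rw [finner_smul_smul, pow_two, Real.sqrt_mul (mul_self_nonneg t),
    Real.sqrt_mul_self ht]

lemma frobNorm_zero {a b : ℕ} : frobNorm (0 : Matrix (Fin a) (Fin b) ℝ) = 0 := by
  unfold frobNorm finner
  simp

lemma blockRect_smul (n1 n2 r p : ℕ) (t : ℝ) (A : Matrix (Fin r) (Fin r) ℝ)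
    (D : Matrix (Fin r) (Fin (p - r)) ℝ) (C : Matrix (Fin (p - r)) (Fin (p - r)) ℝ) :
    blockRect n1 n2 r p (t • A) (t • D) (t • C) = t • blockRect n1 n2 r p A D C := by
  ext i j
  simp only [blockRect, Matrix.of_apply, Matrix.smul_apply, smul_eq_mul]
  split_ifs <;> simp

/-- **Remark (Checking the uniqueness condition via optimization).**
Consider maximizing `½‖A‖_F² + ½‖C‖_F²` over `(A,B,C) ∈ S^r × ℝ^{r×(p−r)} × S₊^{p−r}`
subject to `Φ(Ū [A BC 0; CᵀBᵀ C 0; 0 0 0] V̄ᵀ) = 0`.  If `(A,B,C)` is feasible and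
`(0,B,0)` is a local maximizer, then `A = 0` and `C = 0`. -/
theorem local_maximizer_zero_implies_zero (n1 n2 m r p : ℕ)
    (hrp : r ≤ p) (hpn : p ≤ n1) (hn : n1 ≤ n2)
    (Ub : Matrix (Fin n1) (Fin n1) ℝ) (Vb : Matrix (Fin n2) (Fin n2) ℝ)
    (hU : Ubᵀ * Ub = 1) (hV : Vbᵀ * Vb = 1)
    (Φ : Matrix (Fin n1) (Fin n2) ℝ →ₗ[ℝ] EuclideanSpace ℝ (Fin m))
    (A : Matrix (Fin r) (Fin r) ℝ) (B : Matrix (Fin r) (Fin (p - r)) ℝ)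
    (C : Matrix (Fin (p - r)) (Fin (p - r)) ℝ)
    -- (A, B, C) is feasible
    (hA : Aᵀ = A) (hC : C.PosSemidef)
    (hfeas : Φ (Ub * blockRect n1 n2 r p A (B * C) C * Vbᵀ) = 0)
    -- (0, B, 0) is a local maximizer
    (hloc : ∃ δ > (0:ℝ), ∀ (A' : Matrix (Fin r) (Fin r) ℝ)
        (B' : Matrix (Fin r) (Fin (p - r)) ℝ)
        (C' : Matrix (Fin (p - r)) (Fin (p - r)) ℝ),
      A'ᵀ = A' → C'.PosSemidef →
      Φ (Ub * blockRect n1 n2 r p A' (B' * C') C' * Vbᵀ) = 0 →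
      frobNorm (A' - 0) < δ → frobNorm (B' - B) < δ → frobNorm (C' - 0) < δ →
      1 / 2 * frobNorm A' ^ 2 + 1 / 2 * frobNorm C' ^ 2 ≤
        1 / 2 * frobNorm (0 : Matrix (Fin r) (Fin r) ℝ) ^ 2 +
          1 / 2 * frobNorm (0 : Matrix (Fin (p - r)) (Fin (p - r)) ℝ) ^ 2) :
    A = 0 ∧ C = 0 := by
  obtain ⟨δ, hδ, hmax⟩ := hloc
  set M : ℝ := frobNorm A + frobNorm C + 1 with hM
  have hMpos : 0 < M := by
    have := frobNorm_nonneg A; have := frobNorm_nonneg C; positivity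
  set t : ℝ := δ / (2 * M) with htdef
  have ht : 0 < t := by positivity
  have hlt : ∀ X : ℝ, 0 ≤ X → X ≤ M → t * X < δ := by
    intro X hX0 hXM
    calc t * X ≤ t * M := by nlinarith
    _ = δ / 2 := by rw [htdef, div_mul_eq_mul_div, mul_div_mul_right δ 2 hMpos.ne']
    _ < δ := by linarith
  clear_value t M
  have hAM : frobNorm A ≤ M := by have := frobNorm_nonneg C; simp [hM]; linarith
  have hCM : frobNorm C ≤ M := by have := frobNorm_nonneg A; simp [hM]; linarith
  have hsymm : (t • A)ᵀ = t • A := by rw [Matrix.transpose_smul, hA]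
  have hpsd : (t • C).PosSemidef := by
    refine ⟨?_, fun x => ?_⟩
    · have := hC.1
      simpa [Matrix.IsHermitian, Matrix.conjTranspose_smul] using congrArg (t • ·) this
    · have h1 := hC.2 x
      have : star x ⬝ᵥ (t • C) *ᵥ x = t * (star x ⬝ᵥ C *ᵥ x) := by
        rw [Matrix.smul_mulVec, dotProduct_smul]; rfl
      have e : (x.sum fun i xi => x.sum fun j xj => star xi * (t • C) i j * xj) =
          t * (x.sum fun i xi => x.sum fun j xj => star xi * C i j * xj) := by
        rw [Finsupp.mul_sum]
        refine Finsupp.sum_congr fun i _ => ?_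
        rw [Finsupp.mul_sum]
        refine Finsupp.sum_congr fun j _ => ?_
        rw [Matrix.smul_apply, smul_eq_mul]; ring
      rw [e]
      exact mul_nonneg ht.le h1
  have hBC : B * (t • C) = t • (B * C) := by rw [Matrix.mul_smul]
  have hfeas' : Φ (Ub * blockRect n1 n2 r p (t • A) (B * (t • C)) (t • C) * Vbᵀ) = 0 := by
    rw [hBC, blockRect_smul, Matrix.mul_smul, Matrix.smul_mul, _root_.map_smul, hfeas, smul_zero]
  have key := hmax (t • A) B (t • C) hsymm hpsd hfeas' ?_ ?_ ?_
  · simp only [frobNorm_zero] at key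
    have hfin : t ^ 2 * finner A A + t ^ 2 * finner C C ≤ 0 := by
      have hA2 : frobNorm (t • A) ^ 2 = t ^ 2 * finner A A := by
        unfold frobNorm
        rw [Real.sq_sqrt (finner_self_nonneg _), finner_smul_smul]
      have hC2 : frobNorm (t • C) ^ 2 = t ^ 2 * finner C C := by
        unfold frobNorm
        rw [Real.sq_sqrt (finner_self_nonneg _), finner_smul_smul]
      nlinarith [key]
    have hAn := finner_self_nonneg A
    have hCn := finner_self_nonneg C
    have ht2 : 0 < t ^ 2 := by positivity
    have hA' : t ^ 2 * finner A A = 0 :=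
      le_antisymm (by nlinarith [mul_nonneg ht2.le hCn]) (mul_nonneg ht2.le hAn)
    have hC' : t ^ 2 * finner C C = 0 :=
      le_antisymm (by nlinarith [mul_nonneg ht2.le hAn]) (mul_nonneg ht2.le hCn)
    constructor
    · refine finner_self_eq_zero A ?_
      rcases mul_eq_zero.mp hA' with h | h
      · exact absurd h ht2.ne'
      · exact h
    · refine finner_self_eq_zero C ?_
      rcases mul_eq_zero.mp hC' with h | h
      · exact absurd h ht2.ne'
      · exact h
  · rw [sub_zero, frobNorm_smul t ht.le]
    exact hlt _ (frobNorm_nonneg A) hAM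
  · rw [sub_self, frobNorm_zero]; exact hδ
  · rw [sub_zero, frobNorm_smul t ht.le]
    exact hlt _ (frobNorm_nonneg C) hCM
end

section
/- Let g: X → ℝ be a continuous convex function, Φ: X → Y a linear operator, and x₀ a feasible point of the problem min g(x) subject to Φx = Φx₀. Then x₀ is the unique optimal solution of this problem if and only if Ker Φ ∩ D_g(x₀) = {0}. -/
open Filter Set

/-- The descent cone `D_g(x₀) = cone {x − x₀ : g(x) ≤ g(x₀)}`. -/
def descCone {X : Type*} [AddCommGroup X] [Module ℝ X] (g : X → ℝ) (x : X) : Set X :=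
  {w | ∃ t : ℝ, 0 ≤ t ∧ ∃ z, g z ≤ g x ∧ w = t • (z - x)}

/-- **Proposition (Descent cone for solution uniqueness).**  For a continuous convex
function `g`, a feasible point `x₀` of `min g(x) s.t. Φx = Φx₀` is the unique optimal
solution if and only if `Ker Φ ∩ D_g(x₀) = {0}`. -/
theorem unique_solution_iff_descent_cone
    {X Y : Type*} [NormedAddCommGroup X] [InnerProductSpace ℝ X] [FiniteDimensional ℝ X]
    [NormedAddCommGroup Y] [InnerProductSpace ℝ Y] [FiniteDimensional ℝ Y]
    (Φ : X →ₗ[ℝ] Y) (g : X → ℝ)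
    (hconv : ConvexOn ℝ Set.univ g) (hcont : Continuous g) (x₀ : X) :
    (∀ x, Φ x = Φ x₀ → x ≠ x₀ → g x₀ < g x) ↔
      (LinearMap.ker Φ : Set X) ∩ descCone g x₀ = {0} := by
  constructor
  · intro h
    ext w
    simp only [Set.mem_inter_iff, SetLike.mem_coe, LinearMap.mem_ker, Set.mem_singleton_iff,
      descCone, Set.mem_setOf_eq]
    constructor
    · rintro ⟨hker, t, ht, z, hz, rfl⟩
      rcases eq_or_lt_of_le ht with rfl | ht'
      · simp
      · have hzk : Φ z = Φ x₀ := by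
          have : Φ (z - x₀) = 0 := by
            have := hker
            rw [map_smul] at this
            have := smul_eq_zero.mp this
            rcases this with h0 | h0
            · exact absurd h0 (ne_of_gt ht')
            · exact h0
          rw [map_sub, sub_eq_zero] at this
          exact this
        by_cases hzx : z = x₀
        · simp [hzx]
        · exact absurd hz (not_le.mpr (h z hzk hzx))
    · rintro rfl
      exact ⟨by simp, 0, le_refl 0, x₀, le_refl _, by simp⟩
  · intro h x hΦ hx
    by_contra hlt
    push_neg at hlt
    have hmem : x - x₀ ∈ (LinearMap.ker Φ : Set X) ∩ descCone g x₀ :=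
      ⟨by simp [LinearMap.mem_ker, map_sub, hΦ], 1, zero_le_one, x, hlt, (one_smul ℝ _).symm⟩
    rw [h, Set.mem_singleton_iff, sub_eq_zero] at hmem
    exact hx hmem
end

section
/- Let g: X → ℝ be a continuous convex function, Φ: X → Y a linear operator, and let x₀ be an optimal solution of the problem min g(x) subject to Φx = Φx₀ (so that Δ(x₀) := ∂g(x₀) ∩ Im Φ* ≠ ∅). Then for every dual certificate y ∈ Δ(x₀), Ker Φ ∩ D_g(x₀) = Ker Φ ∩ R_{∂g*(y)}(x₀). -/
open Filter Set

/-- Subdifferential of a (finite-valued) convex function `g` at `x`. -/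
def subdiff {X : Type*} [NormedAddCommGroup X] [InnerProductSpace ℝ X]
    (g : X → ℝ) (x : X) : Set X :=
  {v | ∀ z, (inner ℝ v (z - x) : ℝ) ≤ g z - g x}

/-- **Proposition.**  Let `x₀` be an optimal solution of `min g(x) s.t. Φx = Φx₀`
(so that the set of dual certificates `Δ(x₀) = ∂g(x₀) ∩ Im Φ*` is nonempty).  Then for
every dual certificate `y ∈ Δ(x₀)`,
`Ker Φ ∩ D_g(x₀) = Ker Φ ∩ R_{∂g*(y)}(x₀)`. -/
theorem kernel_inter_descent_eq_kernel_inter_radial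
    {X Y : Type*} [NormedAddCommGroup X] [InnerProductSpace ℝ X] [FiniteDimensional ℝ X]
    [NormedAddCommGroup Y] [InnerProductSpace ℝ Y] [FiniteDimensional ℝ Y]
    (Φ : X →ₗ[ℝ] Y) (g : X → ℝ)
    (hconv : ConvexOn ℝ Set.univ g) (hcont : Continuous g) (x₀ : X)
    (hopt : ∀ x, Φ x = Φ x₀ → g x₀ ≤ g x)
    (hΔ : (subdiff g x₀ ∩ (LinearMap.range (LinearMap.adjoint Φ) : Set X)).Nonempty) :
    ∀ y ∈ subdiff g x₀ ∩ (LinearMap.range (LinearMap.adjoint Φ) : Set X),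
      (LinearMap.ker Φ : Set X) ∩ descCone g x₀ =
        (LinearMap.ker Φ : Set X) ∩ radialCone {x | y ∈ subdiff g x} x₀ := by
  rintro y ⟨hy, u, rfl⟩
  ext w
  simp only [Set.mem_inter_iff, SetLike.mem_coe, LinearMap.mem_ker]
  constructor
  · rintro ⟨hw, t, ht, z, hz, rfl⟩
    refine ⟨hw, ?_⟩
    rcases eq_or_lt_of_le ht with h0 | ht
    · exact ⟨0, le_refl 0, x₀, hy, by rw [← h0, zero_smul, zero_smul]⟩
    · have h1 : t • Φ (z - x₀) = 0 := by rw [← map_smul]; exact hw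
      have hΦz : Φ z = Φ x₀ := by
        rcases smul_eq_zero.mp h1 with h | h
        · exact absurd h (ne_of_gt ht)
        · rw [map_sub, sub_eq_zero] at h; exact h
      have hgz : g z = g x₀ := le_antisymm hz (hopt z hΦz)
      refine ⟨t, le_of_lt ht, z, ?_, rfl⟩
      intro v
      have heq : (inner ℝ ((LinearMap.adjoint Φ) u) (v - z) : ℝ)
           = inner ℝ ((LinearMap.adjoint Φ) u) (v - x₀) := by
        rw [LinearMap.adjoint_inner_left, LinearMap.adjoint_inner_left,
          map_sub, map_sub, hΦz]
      rw [heq, hgz]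
      exact hy v
  · rintro ⟨hw, t, ht, z, hz, rfl⟩
    refine ⟨hw, ?_⟩
    rcases eq_or_lt_of_le ht with h0 | ht
    · exact ⟨0, le_refl 0, x₀, le_refl _, by rw [← h0, zero_smul, zero_smul]⟩
    · have h1 : t • Φ (z - x₀) = 0 := by rw [← map_smul]; exact hw
      have hΦz : Φ z = Φ x₀ := by
        rcases smul_eq_zero.mp h1 with h | h
        · exact absurd h (ne_of_gt ht)
        · rw [map_sub, sub_eq_zero] at h; exact h
      have h0 : (inner ℝ ((LinearMap.adjoint Φ) u) (x₀ - z) : ℝ) = 0 := by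
        rw [LinearMap.adjoint_inner_left, map_sub, hΦz, sub_self, inner_zero_right]
      have := hz x₀
      rw [h0] at this
      exact ⟨t, le_of_lt ht, z, by linarith, rfl⟩
end

section
/- Let g: X → ℝ be a continuous convex function, Φ: X → Y a linear operator, and x₀ feasible for the problem min g(x) subject to Φx = Φx₀. The following are equivalent: (i) x₀ is the unique optimal solution; (ii) Δ(x₀) := ∂g(x₀) ∩ Im Φ* ≠ ∅ and for every y ∈ Δ(x₀), Ker Φ ∩ R_{∂g*(y)}(x₀) = {0}; (iii) Δ(x₀) ≠ ∅ and there exists ȳ ∈ Δ(x₀) with Ker Φ ∩ R_{∂g*(ȳ)}(x₀) = {0}. -/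
open Filter Set

section aux
variable {X Y : Type*} [NormedAddCommGroup X] [InnerProductSpace ℝ X] [FiniteDimensional ℝ X]
  [NormedAddCommGroup Y] [InnerProductSpace ℝ Y] [FiniteDimensional ℝ Y]

lemma aux_orth (Φ : X →ₗ[ℝ] Y) :
    ((LinearMap.ker Φ)ᗮ : Submodule ℝ X) = LinearMap.range (LinearMap.adjoint Φ) := by
  have h : LinearMap.ker Φ = (LinearMap.range (LinearMap.adjoint Φ))ᗮ := by
    ext x
    simp only [LinearMap.mem_ker, Submodule.mem_orthogonal]
    constructor
    · rintro hx u ⟨y, rfl⟩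
      rw [LinearMap.adjoint_inner_left, hx, inner_zero_right]
    · intro h
      have := h (LinearMap.adjoint Φ (Φ x)) ⟨Φ x, rfl⟩
      rwa [LinearMap.adjoint_inner_left, inner_self_eq_zero] at this
  rw [h, Submodule.orthogonal_orthogonal]

lemma aux_exists_cert (Φ : X →ₗ[ℝ] Y) (g : X → ℝ) (hconv : ConvexOn ℝ Set.univ g)
    (hcont : Continuous g) (x₀ : X) (hmin : ∀ x, Φ x = Φ x₀ → g x₀ ≤ g x) :
    (subdiff g x₀ ∩ (LinearMap.range (LinearMap.adjoint Φ) : Set X)).Nonempty := by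
  set E : Set (X × ℝ) := {p | g p.1 - g x₀ < p.2} with hE
  have hEopen : IsOpen E := isOpen_lt (by fun_prop) continuous_snd
  have hEconv : Convex ℝ E := by
    have h1 : ConvexOn ℝ (univ : Set X) (fun z => g z - g x₀) :=
      hconv.sub (concaveOn_const _ convex_univ)
    have := h1.convex_strict_epigraph
    convert this using 1
    ext p; simp [hE]
  set L : Set (X × ℝ) := {p | Φ p.1 = Φ x₀ ∧ p.2 = 0} with hL
  have hLconv : Convex ℝ L := by
    rintro p ⟨hp1, hp2⟩ q ⟨hq1, hq2⟩ a b ha hb hab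
    constructor
    · simp only [Prod.fst_add, Prod.smul_fst, map_add, map_smul, hp1, hq1, smul_eq_mul]
      rw [← add_smul, hab, one_smul]
    · simp [Prod.snd_add, hp2, hq2]
  have hdisj : Disjoint E L := by
    rw [Set.disjoint_left]
    rintro p hpE ⟨hp1, hp2⟩
    have := hmin p.1 hp1
    rw [hE] at hpE
    simp only [mem_setOf_eq, hp2] at hpE
    linarith
  obtain ⟨f, u, hfE, hfL⟩ := geometric_hahn_banach_open hEconv hEopen hLconv hdisj
  set f₁ : X →L[ℝ] ℝ := f.comp (ContinuousLinearMap.inl ℝ X ℝ) with hf₁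
  set c : ℝ := f (0, 1) with hc
  have hsplit : ∀ (z : X) (t : ℝ), f (z, t) = f₁ z + t * c := by
    intro z t
    have : (z, t) = (z, (0:ℝ)) + t • ((0:X), (1:ℝ)) := by
      simp [Prod.ext_iff]
    rw [this, map_add, map_smul]
    simp [hf₁, hc, smul_eq_mul]
  -- c < 0
  have hx₀L : ((x₀, (0:ℝ)) : X × ℝ) ∈ L := ⟨rfl, rfl⟩
  have hux₀ : u ≤ f₁ x₀ := by
    have := hfL _ hx₀L
    rwa [hsplit, mul_comm, mul_zero, add_zero] at this
  have hcneg : c < 0 := by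
    have h1 : ((x₀, (1:ℝ)) : X × ℝ) ∈ E := by simp [hE]
    have := hfE _ h1
    rw [hsplit, one_mul] at this
    linarith
  -- f₁ vanishes on ker Φ
  have hker : ∀ k ∈ LinearMap.ker Φ, f₁ k = 0 := by
    intro k hk
    by_contra hne
    have hr : ∀ r : ℝ, u ≤ f₁ x₀ + r * f₁ k := by
      intro r
      have hmem : ((x₀ + r • k, (0:ℝ)) : X × ℝ) ∈ L := by
        refine ⟨?_, rfl⟩
        rw [map_add, map_smul, LinearMap.mem_ker.mp hk, smul_zero, add_zero]
      have := hfL _ hmem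
      rwa [hsplit, mul_comm, mul_zero, add_zero, map_add, map_smul, smul_eq_mul] at this
    have := hr ((u - f₁ x₀ - 1) / f₁ k)
    rw [div_mul_cancel₀ _ hne] at this
    linarith
  -- main inequality
  have hineq : ∀ z : X, f₁ z + c * (g z - g x₀) ≤ u := by
    intro z
    have key : ∀ ε > (0:ℝ), f₁ z + c * (g z - g x₀) ≤ u + ε := by
      intro ε hε
      have hmem : ((z, g z - g x₀ + ε / (-c)) : X × ℝ) ∈ E := by
        simp only [hE, mem_setOf_eq]
        have : 0 < ε / (-c) := div_pos hε (by linarith)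
        linarith
      have := hfE _ hmem
      rw [hsplit] at this
      have hc' : (-c) * (ε / (-c)) = ε := mul_div_cancel₀ _ (by linarith)
      nlinarith
    exact le_of_forall_pos_le_add key
  -- Riesz
  set v : X := (InnerProductSpace.toDual ℝ X).symm ((-c)⁻¹ • (f₁ : X →L[ℝ] ℝ)) with hv
  have hvw : ∀ w : X, (inner ℝ v w : ℝ) = (-c)⁻¹ * f₁ w := by
    intro w
    rw [hv, InnerProductSpace.toDual_symm_apply]
    simp
  refine ⟨v, ?_, ?_⟩
  · intro z
    rw [hvw, map_sub]
    rw [inv_mul_le_iff₀ (by linarith : (0:ℝ) < -c)]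
    have := hineq z
    nlinarith
  · rw [← aux_orth Φ]
    have : v ∈ (LinearMap.ker Φ)ᗮ := by
      rw [Submodule.mem_orthogonal]
      intro k hk
      rw [real_inner_comm, hvw, hker k hk, mul_zero]
    exact this

end aux

section aux2
variable {X Y : Type*} [NormedAddCommGroup X] [InnerProductSpace ℝ X] [FiniteDimensional ℝ X]
  [NormedAddCommGroup Y] [InnerProductSpace ℝ Y] [FiniteDimensional ℝ Y]

lemma aux_inner_ker (Φ : X →ₗ[ℝ] Y) {y : X}
    (hy : y ∈ LinearMap.range (LinearMap.adjoint Φ)) {k : X} (hk : Φ k = 0) :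
    (inner ℝ y k : ℝ) = 0 := by
  obtain ⟨w, rfl⟩ := hy
  rw [LinearMap.adjoint_inner_left, hk, inner_zero_right]

/-- (iii) ⇒ (i) -/
lemma aux_B (Φ : X →ₗ[ℝ] Y) (g : X → ℝ) (x₀ y : X)
    (hy1 : y ∈ subdiff g x₀) (hy2 : y ∈ LinearMap.range (LinearMap.adjoint Φ))
    (hcone : (LinearMap.ker Φ : Set X) ∩ radialCone {x | y ∈ subdiff g x} x₀ = {0}) :
    ∀ x, Φ x = Φ x₀ → x ≠ x₀ → g x₀ < g x := by
  intro x hx hxne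
  have hk : Φ (x - x₀) = 0 := by rw [map_sub, hx, sub_self]
  have h0 : (inner ℝ y (x - x₀) : ℝ) = 0 := aux_inner_ker Φ hy2 hk
  have hle : g x₀ ≤ g x := by have := hy1 x; rw [h0] at this; linarith
  rcases lt_or_eq_of_le hle with h | h
  · exact h
  · -- g x₀ = g x : then x ∈ ∂g*(y), so x - x₀ ∈ the cone, contradiction
    exfalso
    have hyx : y ∈ subdiff g x := by
      intro z
      have h1 := hy1 z
      have : (inner ℝ y (z - x) : ℝ) = inner ℝ y (z - x₀) - inner ℝ y (x - x₀) := by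
        rw [← inner_sub_right]; congr 1; abel
      rw [this, h0, sub_zero, ← h]
      linarith
    have hmem : x - x₀ ∈ (LinearMap.ker Φ : Set X) ∩ radialCone {x | y ∈ subdiff g x} x₀ := by
      refine ⟨hk, 1, zero_le_one, x, hyx, ?_⟩
      rw [one_smul]
    rw [hcone] at hmem
    exact hxne (by rwa [Set.mem_singleton_iff, sub_eq_zero] at hmem)

/-- (i) ⇒ cone condition for every certificate -/
lemma aux_C (Φ : X →ₗ[ℝ] Y) (g : X → ℝ) (x₀ : X)
    (hi : ∀ x, Φ x = Φ x₀ → x ≠ x₀ → g x₀ < g x) (y : X)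
    (hy1 : y ∈ subdiff g x₀) (hy2 : y ∈ LinearMap.range (LinearMap.adjoint Φ)) :
    (LinearMap.ker Φ : Set X) ∩ radialCone {x | y ∈ subdiff g x} x₀ = {0} := by
  apply Set.eq_singleton_iff_unique_mem.mpr
  constructor
  · exact ⟨by simp, 0, le_refl 0, x₀, hy1, by rw [zero_smul]⟩
  · rintro w ⟨hwker, t, ht, z, hz, rfl⟩
    by_contra hne
    have htne : t ≠ 0 := by rintro rfl; exact hne (zero_smul ℝ _)
    have htpos : 0 < t := lt_of_le_of_ne ht (Ne.symm htne)
    have hzx : z - x₀ ≠ 0 := by rintro h; rw [h, smul_zero] at hne; exact hne rfl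
    have hkz : Φ (z - x₀) = 0 := by
      have : Φ (t • (z - x₀)) = 0 := hwker
      rw [map_smul, smul_eq_zero] at this
      exact this.resolve_left htne
    have hzfe : Φ z = Φ x₀ := by rw [map_sub, sub_eq_zero] at hkz; exact hkz
    have hzne : z ≠ x₀ := fun h => hzx (by rw [h, sub_self])
    have hlt : g x₀ < g z := hi z hzfe hzne
    have h0 : (inner ℝ y (z - x₀) : ℝ) = 0 := aux_inner_ker Φ hy2 hkz
    -- y ∈ ∂g(z) gives g x₀ - g z ≥ ⟨y, x₀ - z⟩ = 0
    have h2 := hz x₀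
    have : (inner ℝ y (x₀ - z) : ℝ) = -(inner ℝ y (z - x₀) : ℝ) := by
      rw [← inner_neg_right, neg_sub]
    rw [this, h0, neg_zero] at h2
    linarith

end aux2

/-- **Theorem (Characterizations of solution uniqueness via radial cones).**
For a continuous convex `g` and a feasible point `x₀` of `min g(x) s.t. Φx = Φx₀`,
with `Δ(x₀) = ∂g(x₀) ∩ Im Φ*` the set of dual certificates, the following are equivalent:
(i) `x₀` is the unique optimal solution;
(ii) `Δ(x₀) ≠ ∅` and `Ker Φ ∩ R_{∂g*(y)}(x₀) = {0}` for every `y ∈ Δ(x₀)`;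
(iii) `Δ(x₀) ≠ ∅` and `Ker Φ ∩ R_{∂g*(ȳ)}(x₀) = {0}` for some `ȳ ∈ Δ(x₀)`. -/
theorem unique_solution_tfae_radial_cone
    {X Y : Type*} [NormedAddCommGroup X] [InnerProductSpace ℝ X] [FiniteDimensional ℝ X]
    [NormedAddCommGroup Y] [InnerProductSpace ℝ Y] [FiniteDimensional ℝ Y]
    (Φ : X →ₗ[ℝ] Y) (g : X → ℝ)
    (hconv : ConvexOn ℝ Set.univ g) (hcont : Continuous g) (x₀ : X) :
    ((∀ x, Φ x = Φ x₀ → x ≠ x₀ → g x₀ < g x) ↔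
      ((subdiff g x₀ ∩ (LinearMap.range (LinearMap.adjoint Φ) : Set X)).Nonempty ∧
        ∀ y ∈ subdiff g x₀ ∩ (LinearMap.range (LinearMap.adjoint Φ) : Set X),
          (LinearMap.ker Φ : Set X) ∩ radialCone {x | y ∈ subdiff g x} x₀ = {0})) ∧
    (((subdiff g x₀ ∩ (LinearMap.range (LinearMap.adjoint Φ) : Set X)).Nonempty ∧
        ∀ y ∈ subdiff g x₀ ∩ (LinearMap.range (LinearMap.adjoint Φ) : Set X),
          (LinearMap.ker Φ : Set X) ∩ radialCone {x | y ∈ subdiff g x} x₀ = {0}) ↔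
      ((subdiff g x₀ ∩ (LinearMap.range (LinearMap.adjoint Φ) : Set X)).Nonempty ∧
        ∃ y ∈ subdiff g x₀ ∩ (LinearMap.range (LinearMap.adjoint Φ) : Set X),
          (LinearMap.ker Φ : Set X) ∩ radialCone {x | y ∈ subdiff g x} x₀ = {0})) := by
  constructor
  · constructor
    · intro hi
      have hmin : ∀ x, Φ x = Φ x₀ → g x₀ ≤ g x := by
        intro x hx
        by_cases hxx : x = x₀
        · rw [hxx]
        · exact (hi x hx hxx).le
      refine ⟨aux_exists_cert Φ g hconv hcont x₀ hmin, ?_⟩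
      intro y hy
      exact aux_C Φ g x₀ hi y hy.1 hy.2
    · rintro ⟨⟨y, hy⟩, hall⟩
      exact aux_B Φ g x₀ y hy.1 hy.2 (hall y hy)
  · constructor
    · rintro ⟨hne, hall⟩
      obtain ⟨y, hy⟩ := hne
      exact ⟨⟨y, hy⟩, y, hy, hall y hy⟩
    · rintro ⟨hne, y, hy, hcone⟩
      have hi := aux_B Φ g x₀ y hy.1 hy.2 hcone
      exact ⟨hne, fun y' hy' => aux_C Φ g x₀ hi y' hy'.1 hy'.2⟩
end

section
/- Let X₀ be an optimal solution of the nuclear norm minimization problem min ‖X‖_* subject to ΦX = ΦX₀ (Φ: ℝ^{n1×n2} → ℝ^m linear, n2 ≥ n1), with compact SVD X₀ = U₀Σ₀V₀ᵀ, rank(X₀) = r. (i) If X₀ is the unique solution, then the Strict Restricted Injectivity condition Ker Φ ∩ U₀ S^r V₀ᵀ = {0} holds. (ii) If in addition the Nondegenerate Source Condition Im Φ* ∩ ri(∂‖X₀‖_*) ≠ ∅ holds, then Strict Restricted Injectivity is also sufficient: it implies X₀ is the unique solution. -/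
open Matrix Filter Set

/-- The spectral norm `‖X‖ = σ₁(X)`. -/
noncomputable def spectralNormMat {a b : ℕ} (X : Matrix (Fin a) (Fin b) ℝ) : ℝ :=
  ⨆ i, svals X i

section Basic

variable {a b c : ℕ}

lemma dot_cs (u y : Fin a → ℝ) :
    u ⬝ᵥ y ≤ Real.sqrt (u ⬝ᵥ u) * Real.sqrt (y ⬝ᵥ y) := by
  have h := Finset.sum_mul_sq_le_sq_mul_sq Finset.univ u y
  calc u ⬝ᵥ y ≤ |u ⬝ᵥ y| := le_abs_self _
    _ = Real.sqrt ((u ⬝ᵥ y) ^ 2) := (Real.sqrt_sq_eq_abs _).symm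
    _ ≤ Real.sqrt ((∑ i, u i ^ 2) * ∑ i, y i ^ 2) := Real.sqrt_le_sqrt h
    _ = _ := by
        rw [Real.sqrt_mul (by positivity)]
        simp [dotProduct, pow_two]

lemma dot_self_nonneg (u : Fin a → ℝ) : 0 ≤ u ⬝ᵥ u :=
  Finset.sum_nonneg fun i _ => mul_self_nonneg _

lemma finner_comm (A B : Matrix (Fin a) (Fin b) ℝ) : finner A B = finner B A := by
  rw [finner, finner, ← Matrix.trace_transpose, Matrix.transpose_mul, Matrix.transpose_transpose]

lemma finner_sub_right (Y A B : Matrix (Fin a) (Fin b) ℝ) :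
    finner Y (A - B) = finner Y A - finner Y B := by
  simp [finner, Matrix.mul_sub]

lemma finner_add_right (Y A B : Matrix (Fin a) (Fin b) ℝ) :
    finner Y (A + B) = finner Y A + finner Y B := by
  simp [finner, Matrix.mul_add]

lemma finner_smul_right (Y A : Matrix (Fin a) (Fin b) ℝ) (t : ℝ) :
    finner Y (t • A) = t * finner Y A := by
  simp [finner, Matrix.mul_smul, Matrix.trace_smul]

lemma finner_zero_right (Y : Matrix (Fin a) (Fin b) ℝ) : finner Y 0 = 0 := by
  simp [finner]

lemma finner_vecMulVec_right (Y : Matrix (Fin a) (Fin b) ℝ) (u : Fin a → ℝ) (v : Fin b → ℝ) :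
    finner Y (vecMulVec u v) = u ⬝ᵥ (Y *ᵥ v) := by
  simp only [finner, Matrix.trace, Matrix.diag, Matrix.mul_apply, Matrix.transpose_apply,
    vecMulVec_apply, dotProduct, Matrix.mulVec, Finset.mul_sum]
  rw [Finset.sum_comm]
  apply Finset.sum_congr rfl; intro i _
  apply Finset.sum_congr rfl; intro j _
  ring

lemma vecMulVec_dot (u : Fin a → ℝ) (v w : Fin b → ℝ) :
    vecMulVec u v *ᵥ w = (v ⬝ᵥ w) • u := by
  ext i
  simp [Matrix.mulVec, vecMulVec_apply, dotProduct, Finset.mul_sum, Finset.sum_mul]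
  apply Finset.sum_congr rfl; intro j _; ring

lemma triple_entry (U : Matrix (Fin a) (Fin c) ℝ) (G : Matrix (Fin a) (Fin b) ℝ)
    (V : Matrix (Fin b) (Fin c) ℝ) (i j : Fin c) :
    (Uᵀ * G * V) i j = (fun k => U k i) ⬝ᵥ (G *ᵥ fun l => V l j) := by
  simp only [Matrix.mul_apply, Matrix.transpose_apply, dotProduct, Matrix.mulVec,
    Finset.sum_mul, Finset.mul_sum]
  rw [Finset.sum_comm]
  apply Finset.sum_congr rfl; intro k _
  apply Finset.sum_congr rfl; intro l _
  ring

lemma finner_diag_expand (G : Matrix (Fin a) (Fin b) ℝ) (U : Matrix (Fin a) (Fin c) ℝ)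
    (d : Fin c → ℝ) (V : Matrix (Fin b) (Fin c) ℝ) :
    finner G (U * Matrix.diagonal d * Vᵀ) = ∑ i, d i * ((Uᵀ * G * V) i i) := by
  rw [finner, show Gᵀ * (U * Matrix.diagonal d * Vᵀ) = ((Gᵀ * U) * Matrix.diagonal d) * Vᵀ by
    simp [Matrix.mul_assoc], Matrix.trace_mul_comm, ← Matrix.mul_assoc]
  have key : ∀ i, (Vᵀ * (Gᵀ * U)) i i = (Uᵀ * G * V) i i := by
    intro i
    have : (Uᵀ * G * V)ᵀ = Vᵀ * (Gᵀ * U) := by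
      rw [Matrix.transpose_mul, Matrix.transpose_mul, Matrix.transpose_transpose]
    rw [← this, Matrix.transpose_apply]
  rw [Matrix.trace]
  simp only [Matrix.diag, Matrix.mul_diagonal]
  exact Finset.sum_congr rfl fun i _ => by rw [key i, mul_comm]

end Basic

section VMV
open Matrix
variable {a b c : ℕ}

lemma vecMulVec_transpose (u : Fin a → ℝ) (v : Fin b → ℝ) :
    (vecMulVec u v)ᵀ = vecMulVec v u := by
  ext i j; simp [vecMulVec_apply, mul_comm]

lemma mul_vecMulVec (M : Matrix (Fin a) (Fin b) ℝ) (u : Fin b → ℝ) (v : Fin c → ℝ) :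
    M * vecMulVec u v = vecMulVec (M *ᵥ u) v := by
  ext i j
  simp [Matrix.mul_apply, vecMulVec_apply, Matrix.mulVec, dotProduct, Finset.sum_mul, mul_assoc]

lemma vecMulVec_mul (u : Fin a → ℝ) (v : Fin b → ℝ) (M : Matrix (Fin b) (Fin c) ℝ) :
    vecMulVec u v * M = vecMulVec u (Mᵀ *ᵥ v) := by
  ext i j
  simp only [Matrix.mul_apply, vecMulVec_apply, Matrix.mulVec, dotProduct,
    Matrix.transpose_apply, Finset.mul_sum]
  exact Finset.sum_congr rfl fun k _ => by ring

lemma vecMulVec_smul_right (u : Fin a → ℝ) (v : Fin b → ℝ) (t : ℝ) :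
    vecMulVec u (t • v) = t • vecMulVec u v := by
  ext i j; simp [vecMulVec_apply]; ring

lemma vecMulVec_zero_left (v : Fin b → ℝ) : vecMulVec (0 : Fin a → ℝ) v = 0 := by
  ext i j; simp [vecMulVec_apply]

lemma trace_vecMulVec (u v : Fin a → ℝ) : Matrix.trace (vecMulVec u v) = u ⬝ᵥ v := by
  simp [Matrix.trace, Matrix.diag, vecMulVec_apply, dotProduct]

lemma posSemidef_smul {n : ℕ} {S : Matrix (Fin n) (Fin n) ℝ} (hS : S.PosSemidef) {t : ℝ}
    (ht : 0 ≤ t) : (t • S).PosSemidef := by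
  refine Matrix.PosSemidef.of_dotProduct_mulVec_nonneg ?_ fun x => ?_
  · have h := hS.1
    unfold Matrix.IsHermitian at h ⊢
    rw [Matrix.conjTranspose_smul, h, star_trivial]
  · rw [Matrix.smul_mulVec, dotProduct_smul, smul_eq_mul]
    exact mul_nonneg ht (hS.dotProduct_mulVec_nonneg x)

lemma posSemidef_vecMulVec (u : Fin a → ℝ) : (vecMulVec u u).PosSemidef := by
  refine Matrix.PosSemidef.of_dotProduct_mulVec_nonneg ?_ fun x => ?_
  · unfold Matrix.IsHermitian
    rw [Matrix.conjTranspose_eq_transpose_of_trivial, vecMulVec_transpose]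
  · rw [vecMulVec_dot, dotProduct_smul, star_trivial, smul_eq_mul, dotProduct_comm]
    exact mul_self_nonneg _

end VMV

section NN
open Matrix
variable {a b c : ℕ}

lemma nuclearNorm_eq_sum (X : Matrix (Fin a) (Fin b) ℝ) :
    nuclearNorm X
      = ∑ i, Real.sqrt ((Matrix.isHermitian_mul_conjTranspose_self X).eigenvalues i) := by
  unfold nuclearNorm svals
  exact Equiv.sum_comp ((Fin.revPerm).trans
    (Tuple.sort (Matrix.isHermitian_mul_conjTranspose_self X).eigenvalues))
    (fun j => Real.sqrt ((Matrix.isHermitian_mul_conjTranspose_self X).eigenvalues j))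

open scoped MatrixOrder in
lemma trace_sqrt {n : ℕ} {P : Matrix (Fin n) (Fin n) ℝ} (hP : P.PosSemidef) :
    (CFC.sqrt P).trace = ∑ i, Real.sqrt (hP.1.eigenvalues i) := by
  rw [CFC.sqrt_eq_real_sqrt P hP.nonneg, cfcₙ_eq_cfc, hP.1.cfc_eq, Matrix.IsHermitian.cfc,
    Unitary.conjStarAlgAut_apply, Matrix.trace_mul_comm, ← Matrix.mul_assoc]
  rw [(Matrix.mem_unitaryGroup_iff').mp (hP.1.eigenvectorUnitary).2, Matrix.one_mul]
  simp [Matrix.trace_diagonal]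

open scoped MatrixOrder in
lemma nuclearNorm_eq_trace (X : Matrix (Fin a) (Fin b) ℝ)
    {S : Matrix (Fin a) (Fin a) ℝ} (hS : S.PosSemidef) (h : S * S = X * Xᵀ) :
    nuclearNorm X = S.trace := by
  have hP : (X * Xᴴ).PosSemidef := Matrix.posSemidef_self_mul_conjTranspose X
  have hsq : S ^ 2 = X * Xᴴ := by
    rw [pow_two, h, Matrix.conjTranspose_eq_transpose_of_trivial]
  rw [nuclearNorm_eq_sum, ← CFC.sqrt_unique (a := X * Xᴴ) (by rwa [← pow_two]) hS.nonneg, trace_sqrt hP]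

lemma nuclearNorm_zero : nuclearNorm (0 : Matrix (Fin a) (Fin b) ℝ) = 0 := by
  rw [nuclearNorm_eq_trace (0 : Matrix (Fin a) (Fin b) ℝ) Matrix.PosSemidef.zero (by simp)]
  simp

open scoped MatrixOrder in
lemma nuclearNorm_smul (X : Matrix (Fin a) (Fin b) ℝ) {t : ℝ} (ht : 0 ≤ t) :
    nuclearNorm (t • X) = t * nuclearNorm X := by
  have hP : (X * Xᴴ).PosSemidef := Matrix.posSemidef_self_mul_conjTranspose X
  have hS₀ : CFC.sqrt (X * Xᴴ) * CFC.sqrt (X * Xᴴ) = X * Xᵀ := by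
    rw [CFC.sqrt_mul_sqrt_self _ hP.nonneg, Matrix.conjTranspose_eq_transpose_of_trivial]
  rw [nuclearNorm_eq_trace X (CFC.sqrt_nonneg (X * Xᴴ)).posSemidef hS₀]
  have h2 : (t • CFC.sqrt (X * Xᴴ)) * (t • CFC.sqrt (X * Xᴴ)) = (t • X) * (t • X)ᵀ := by
    rw [Matrix.transpose_smul, Matrix.smul_mul, Matrix.mul_smul, Matrix.smul_mul,
      Matrix.mul_smul, hS₀, smul_smul]
  rw [nuclearNorm_eq_trace (t • X) (posSemidef_smul (CFC.sqrt_nonneg (X * Xᴴ)).posSemidef ht) h2,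
    Matrix.trace_smul, smul_eq_mul]

lemma nuclearNorm_conj {n1 n2 r : ℕ} (U : Matrix (Fin n1) (Fin r) ℝ)
    (V : Matrix (Fin n2) (Fin r) ℝ) (hU : Uᵀ * U = 1) (hV : Vᵀ * V = 1)
    {M : Matrix (Fin r) (Fin r) ℝ} (hM : M.PosSemidef) :
    nuclearNorm (U * M * Vᵀ) = M.trace := by
  have hMt : Mᵀ = M := by
    have h := hM.1
    unfold Matrix.IsHermitian at h
    rwa [Matrix.conjTranspose_eq_transpose_of_trivial] at h
  have hSpsd : (U * M * Uᵀ).PosSemidef := by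
    have := hM.mul_mul_conjTranspose_same U
    rwa [Matrix.conjTranspose_eq_transpose_of_trivial] at this
  have hSS : (U * M * Uᵀ) * (U * M * Uᵀ) = (U * M * Vᵀ) * (U * M * Vᵀ)ᵀ := by
    rw [Matrix.transpose_mul, Matrix.transpose_mul, Matrix.transpose_transpose, hMt]
    calc (U * M * Uᵀ) * (U * M * Uᵀ) = U * (M * ((Uᵀ * U) * (M * Uᵀ))) := by
          simp only [Matrix.mul_assoc]
      _ = U * (M * ((Vᵀ * V) * (M * Uᵀ))) := by rw [hU, hV]
      _ = U * M * Vᵀ * (V * (M * Uᵀ)) := by simp only [Matrix.mul_assoc]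
  rw [nuclearNorm_eq_trace (U * M * Vᵀ) hSpsd hSS, Matrix.trace_mul_cycle, hU,
    Matrix.one_mul]

end NN
section NN2
open Matrix
variable {a b : ℕ}

lemma vecMulVec_mul_transpose (u : Fin a → ℝ) (v : Fin b → ℝ) :
    (vecMulVec u v) * (vecMulVec u v)ᵀ = (v ⬝ᵥ v) • vecMulVec u u := by
  rw [vecMulVec_transpose, vecMulVec_mul, vecMulVec_transpose, vecMulVec_dot,
    vecMulVec_smul_right]

lemma nuclearNorm_vecMulVec (u : Fin a → ℝ) (v : Fin b → ℝ) :
    nuclearNorm (vecMulVec u v) = Real.sqrt (u ⬝ᵥ u) * Real.sqrt (v ⬝ᵥ v) := by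
  by_cases hu : u ⬝ᵥ u = 0
  · have : u = 0 := dotProduct_self_eq_zero.mp hu
    rw [this, vecMulVec_zero_left, nuclearNorm_zero]
    rw [this] at hu
    rw [hu]
    simp
  · have hun : 0 ≤ u ⬝ᵥ u := dot_self_nonneg u
    have hvn : 0 ≤ v ⬝ᵥ v := dot_self_nonneg v
    have hsu : (0:ℝ) < Real.sqrt (u ⬝ᵥ u) := Real.sqrt_pos.mpr (lt_of_le_of_ne hun (Ne.symm hu))
    set c : ℝ := Real.sqrt (v ⬝ᵥ v) / Real.sqrt (u ⬝ᵥ u) with hc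
    have hcnn : 0 ≤ c := div_nonneg (Real.sqrt_nonneg _) (Real.sqrt_nonneg _)
    have hpsd : (c • vecMulVec u u).PosSemidef := posSemidef_smul (posSemidef_vecMulVec u) hcnn
    have hsq : (c • vecMulVec u u) * (c • vecMulVec u u)
        = (vecMulVec u v) * (vecMulVec u v)ᵀ := by
      rw [vecMulVec_mul_transpose, Matrix.smul_mul, Matrix.mul_smul, smul_smul,
        vecMulVec_mul, vecMulVec_transpose, vecMulVec_dot, vecMulVec_smul_right, smul_smul]
      congr 1
      rw [hc, div_mul_div_comm, Real.mul_self_sqrt hvn, Real.mul_self_sqrt hun]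
      field_simp
    rw [nuclearNorm_eq_trace _ hpsd hsq, Matrix.trace_smul, trace_vecMulVec, smul_eq_mul, hc]
    rw [div_mul_eq_mul_div, div_eq_iff (ne_of_gt hsu)]
    have h5 : Real.sqrt (u ⬝ᵥ u) * Real.sqrt (v ⬝ᵥ v) * Real.sqrt (u ⬝ᵥ u)
        = Real.sqrt (v ⬝ᵥ v) * (Real.sqrt (u ⬝ᵥ u) * Real.sqrt (u ⬝ᵥ u)) := by ring
    rw [h5, Real.mul_self_sqrt hun, mul_comm]

lemma nuclearNorm_spike {n1 n2 r : ℕ} (U₀ : Matrix (Fin n1) (Fin r) ℝ)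
    (V₀ : Matrix (Fin n2) (Fin r) ℝ) (hU₀ : U₀ᵀ * U₀ = 1) (hV₀ : V₀ᵀ * V₀ = 1)
    (d : Fin r → ℝ) (hd : ∀ i, 0 ≤ d i) (u : Fin n1 → ℝ) (w : Fin n2 → ℝ)
    (huu : u ⬝ᵥ u = 1) (hww : w ⬝ᵥ w = 1) (hu0 : U₀ᵀ *ᵥ u = 0) (hw0 : V₀ᵀ *ᵥ w = 0) :
    nuclearNorm (U₀ * Matrix.diagonal d * V₀ᵀ + vecMulVec u w) = (∑ i, d i) + 1 := by
  set A : Matrix (Fin n1) (Fin n1) ℝ := U₀ * Matrix.diagonal d * U₀ᵀ with hA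
  set B : Matrix (Fin n1) (Fin n1) ℝ := vecMulVec u u with hB
  have hApsd : A.PosSemidef := by
    have := (Matrix.PosSemidef.diagonal (fun i => hd i)).mul_mul_conjTranspose_same U₀
    rwa [Matrix.conjTranspose_eq_transpose_of_trivial] at this
  have hAu : A *ᵥ u = 0 := by
    rw [hA, ← Matrix.mulVec_mulVec, ← Matrix.mulVec_mulVec, hu0]
    simp
  have hAB : A * B = 0 := by
    rw [hB, mul_vecMulVec, hAu, vecMulVec_zero_left]
  have hBA : B * A = 0 := by
    rw [hB, vecMulVec_mul]
    have : Aᵀ = A := by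
      rw [hA, Matrix.transpose_mul, Matrix.transpose_mul, Matrix.transpose_transpose,
        Matrix.diagonal_transpose, Matrix.mul_assoc]
    rw [this, hAu]
    ext i j; simp [vecMulVec_apply]
  have hBB : B * B = B := by
    rw [hB, vecMulVec_mul, vecMulVec_transpose, vecMulVec_dot, huu, one_smul]
  have hX₀w : (U₀ * Matrix.diagonal d * V₀ᵀ) *ᵥ w = 0 := by
    rw [← Matrix.mulVec_mulVec, hw0]
    simp
  have hpsd : (A + B).PosSemidef := hApsd.add (posSemidef_vecMulVec u)
  have hsq : (A + B) * (A + B)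
      = (U₀ * Matrix.diagonal d * V₀ᵀ + vecMulVec u w)
        * (U₀ * Matrix.diagonal d * V₀ᵀ + vecMulVec u w)ᵀ := by
    rw [Matrix.add_mul, Matrix.mul_add, Matrix.mul_add, hAB, hBA, hBB,
      Matrix.transpose_add, Matrix.add_mul, Matrix.mul_add, Matrix.mul_add]
    have h1 : (U₀ * Matrix.diagonal d * V₀ᵀ) * (U₀ * Matrix.diagonal d * V₀ᵀ)ᵀ = A * A := by
      rw [Matrix.transpose_mul, Matrix.transpose_mul, Matrix.transpose_transpose,
        Matrix.diagonal_transpose, hA]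
      calc U₀ * Matrix.diagonal d * V₀ᵀ * (V₀ * (Matrix.diagonal d * U₀ᵀ))
          = U₀ * (Matrix.diagonal d * ((V₀ᵀ * V₀) * (Matrix.diagonal d * U₀ᵀ))) := by
            simp only [Matrix.mul_assoc]
        _ = U₀ * (Matrix.diagonal d * ((U₀ᵀ * U₀) * (Matrix.diagonal d * U₀ᵀ))) := by
            rw [hV₀, hU₀]
        _ = U₀ * Matrix.diagonal d * U₀ᵀ * (U₀ * (Matrix.diagonal d * U₀ᵀ)) := by
            simp only [Matrix.mul_assoc]
        _ = _ := by simp only [Matrix.mul_assoc]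
    have h2 : (U₀ * Matrix.diagonal d * V₀ᵀ) * (vecMulVec u w)ᵀ = 0 := by
      rw [vecMulVec_transpose, mul_vecMulVec, hX₀w, vecMulVec_zero_left]
    have h3 : vecMulVec u w * (U₀ * Matrix.diagonal d * V₀ᵀ)ᵀ = 0 := by
      rw [vecMulVec_mul, Matrix.transpose_transpose, hX₀w]
      ext i j; simp [vecMulVec_apply]
    have h4 : vecMulVec u w * (vecMulVec u w)ᵀ = B := by
      rw [vecMulVec_mul_transpose, hww, one_smul, hB]
    rw [h1, h2, h3, h4]
    try abel
  rw [nuclearNorm_eq_trace _ hpsd hsq, Matrix.trace_add, hA, hB, Matrix.trace_mul_cycle,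
    hU₀, Matrix.one_mul, Matrix.trace_diagonal, trace_vecMulVec, huu]

end NN2
section SVD
open Matrix
variable {a b : ℕ}

lemma mul_transpose_self_eq_zero {M : Matrix (Fin a) (Fin b) ℝ} (h : M * Mᵀ = 0) : M = 0 := by
  ext i j
  have hii : (M * Mᵀ) i i = 0 := by rw [h]; rfl
  rw [Matrix.mul_apply] at hii
  simp only [Matrix.transpose_apply] at hii
  have hz := (Finset.sum_eq_zero_iff_of_nonneg (fun k _ => mul_self_nonneg (M i k))).mp hii
  have := hz j (Finset.mem_univ j)
  simpa [mul_self_eq_zero] using this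

lemma col_dot (U V : Matrix (Fin a) (Fin b) ℝ) (i : Fin b) :
    (Uᵀ * V) i i = (fun k => U k i) ⬝ᵥ (fun k => V k i) := by
  simp [Matrix.mul_apply, dotProduct, Matrix.transpose_apply]

lemma exists_svd (Z : Matrix (Fin a) (Fin b) ℝ) :
    ∃ (W : Matrix (Fin a) (Fin a) ℝ) (V : Matrix (Fin b) (Fin a) ℝ) (s : Fin a → ℝ),
      (∀ i, 0 ≤ s i) ∧ Wᵀ * W = 1 ∧ W * Wᵀ = 1 ∧
      Vᵀ * V = Matrix.diagonal (fun i => if s i = 0 then 0 else 1) ∧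
      Z = W * Matrix.diagonal s * Vᵀ ∧ nuclearNorm Z = ∑ i, s i := by
  have h := Matrix.isHermitian_mul_conjTranspose_self Z
  set lam := h.eigenvalues with hlamdef
  have hlam : ∀ i, 0 ≤ lam i := fun i => Matrix.eigenvalues_self_mul_conjTranspose_nonneg Z i
  set W : Matrix (Fin a) (Fin a) ℝ := (h.eigenvectorUnitary : Matrix (Fin a) (Fin a) ℝ) with hWdef
  have hW1 : Wᵀ * W = 1 := by
    have h2 := (Matrix.mem_unitaryGroup_iff').mp h.eigenvectorUnitary.2
    simp only [Matrix.star_eq_conjTranspose,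
      Matrix.conjTranspose_eq_transpose_of_trivial] at h2
    exact h2
  have hWW : W * Wᵀ = 1 := by
    have h2 := (Matrix.mem_unitaryGroup_iff).mp h.eigenvectorUnitary.2
    simp only [Matrix.star_eq_conjTranspose,
      Matrix.conjTranspose_eq_transpose_of_trivial] at h2
    exact h2
  have hspec : Z * Zᵀ = W * Matrix.diagonal lam * Wᵀ := by
    have hs := h.spectral_theorem
    simp only [Matrix.star_eq_conjTranspose,
      Matrix.conjTranspose_eq_transpose_of_trivial] at hs
    have hofreal : (RCLike.ofReal ∘ lam : Fin a → ℝ) = lam := by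
      funext i; simp
    rw [hofreal] at hs
    exact hs
  have hdiag : Wᵀ * (Z * Zᵀ) * W = Matrix.diagonal lam := by
    rw [hspec]
    calc Wᵀ * (W * Matrix.diagonal lam * Wᵀ) * W
        = (Wᵀ * W) * Matrix.diagonal lam * (Wᵀ * W) := by simp only [Matrix.mul_assoc]
      _ = Matrix.diagonal lam := by rw [hW1]; simp
  set s : Fin a → ℝ := fun i => Real.sqrt (lam i) with hsdef
  have hs0 : ∀ i, s i = 0 ↔ lam i = 0 := by
    intro i
    constructor
    · intro hh
      have := Real.sqrt_eq_zero (hlam i) |>.mp hh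
      exact this
    · intro hh; rw [hsdef]; simp [hh]
  set g : Fin a → ℝ := fun i => if lam i = 0 then 0 else (s i)⁻¹ with hgdef
  set V : Matrix (Fin b) (Fin a) ℝ := Zᵀ * W * Matrix.diagonal g with hVdef
  have hVt : Vᵀ = Matrix.diagonal g * (Wᵀ * Z) := by
    rw [hVdef, Matrix.transpose_mul, Matrix.transpose_mul, Matrix.diagonal_transpose,
      Matrix.transpose_transpose]
  refine ⟨W, V, s, fun i => Real.sqrt_nonneg _, hW1, hWW, ?_, ?_, ?_⟩
  · -- VᵀV
    rw [hVt, hVdef]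
    calc Matrix.diagonal g * (Wᵀ * Z) * (Zᵀ * W * Matrix.diagonal g)
        = Matrix.diagonal g * (Wᵀ * (Z * Zᵀ) * W) * Matrix.diagonal g := by
          simp only [Matrix.mul_assoc]
      _ = Matrix.diagonal g * Matrix.diagonal lam * Matrix.diagonal g := by rw [hdiag]
      _ = Matrix.diagonal (fun i => g i * lam i * g i) := by
          rw [Matrix.diagonal_mul_diagonal, Matrix.diagonal_mul_diagonal]
      _ = Matrix.diagonal (fun i => if s i = 0 then 0 else 1) := by
          have hfun : (fun i => g i * lam i * g i) = (fun i => if s i = 0 then 0 else 1) := by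
            funext i
            rw [hgdef]
            by_cases hl : lam i = 0
            · simp [hl, (hs0 i).mpr hl]
            · have hsne : s i ≠ 0 := fun hh => hl ((hs0 i).mp hh)
              have hsq : s i * s i = lam i := Real.mul_self_sqrt (hlam i)
              simp only [if_neg hl, if_neg hsne]
              rw [← hsq]
              field_simp
          rw [hfun]
  · -- Z = W diag s Vᵀ
    rw [hVt]
    have hsg : (fun i => s i * g i) = fun i => if lam i = 0 then 0 else 1 := by
      funext i
      by_cases hl : lam i = 0
      · simp [hgdef, hl]
      · have hsne : s i ≠ 0 := fun hh => hl ((hs0 i).mp hh)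
        simp [hgdef, hl, hsne]
    set e0 : Fin a → ℝ := fun i => if lam i = 0 then 1 else 0 with he0def
    have hK : Matrix.diagonal e0 * (Wᵀ * Z) = 0 := by
      apply mul_transpose_self_eq_zero
      have ht : (Matrix.diagonal e0 * (Wᵀ * Z))ᵀ = Zᵀ * W * Matrix.diagonal e0 := by
        rw [Matrix.transpose_mul, Matrix.transpose_mul, Matrix.diagonal_transpose,
          Matrix.transpose_transpose, Matrix.mul_assoc]
      rw [ht]
      calc Matrix.diagonal e0 * (Wᵀ * Z) * (Zᵀ * W * Matrix.diagonal e0)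
          = Matrix.diagonal e0 * (Wᵀ * (Z * Zᵀ) * W) * Matrix.diagonal e0 := by
            simp only [Matrix.mul_assoc]
        _ = Matrix.diagonal e0 * Matrix.diagonal lam * Matrix.diagonal e0 := by rw [hdiag]
        _ = Matrix.diagonal (fun i => e0 i * lam i * e0 i) := by
            rw [Matrix.diagonal_mul_diagonal, Matrix.diagonal_mul_diagonal]
        _ = 0 := by
            have hfun : (fun i => e0 i * lam i * e0 i) = (fun _ => (0:ℝ)) := by
              funext i
              rw [he0def]
              by_cases hl : lam i = 0 <;> simp [hl]
            rw [hfun, Matrix.diagonal_zero]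
    have hee : Matrix.diagonal (fun i => s i * g i) = 1 - Matrix.diagonal e0 := by
      rw [hsg, ← Matrix.diagonal_one, Matrix.diagonal_sub]
      have hfun : (fun i => if lam i = 0 then (0:ℝ) else 1) = (fun i => 1 - e0 i) := by
        funext i
        rw [he0def]
        by_cases hl : lam i = 0 <;> simp [hl]
      rw [hfun]
    calc Z = (W * Wᵀ) * Z := by rw [hWW, Matrix.one_mul]
      _ = W * Matrix.diagonal (fun i => s i * g i) * (Wᵀ * Z) := by
          rw [hee]
          rw [Matrix.mul_sub, Matrix.mul_one, Matrix.sub_mul]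
          rw [show W * Matrix.diagonal e0 * (Wᵀ * Z) = W * (Matrix.diagonal e0 * (Wᵀ * Z)) by
            simp only [Matrix.mul_assoc], hK]
          simp [Matrix.mul_assoc]
      _ = W * Matrix.diagonal s * (Matrix.diagonal g * (Wᵀ * Z)) := by
          rw [← Matrix.diagonal_mul_diagonal]
          simp only [Matrix.mul_assoc]
  · exact nuclearNorm_eq_sum Z

lemma ball_finner_le {G : Matrix (Fin a) (Fin b) ℝ}
    (hG : ∀ (u : Fin a → ℝ) (v : Fin b → ℝ),
      u ⬝ᵥ (G *ᵥ v) ≤ Real.sqrt (u ⬝ᵥ u) * Real.sqrt (v ⬝ᵥ v))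
    (Z : Matrix (Fin a) (Fin b) ℝ) : finner G Z ≤ nuclearNorm Z := by
  obtain ⟨W, V, s, hs, hW1, hWW, hVV, hZ, hnn⟩ := exists_svd Z
  rw [hnn, hZ, finner_diag_expand]
  apply Finset.sum_le_sum
  intro i _
  have hWi : (fun k => W k i) ⬝ᵥ (fun k => W k i) = 1 := by
    rw [← col_dot, hW1, Matrix.one_apply_eq]
  have hVi : (fun k => V k i) ⬝ᵥ (fun k => V k i) ≤ 1 := by
    rw [← col_dot, hVV, Matrix.diagonal_apply_eq]
    by_cases hsi : s i = 0 <;> simp [hsi]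
  have hb : (Wᵀ * G * V) i i ≤ 1 := by
    rw [triple_entry]
    calc (fun k => W k i) ⬝ᵥ (G *ᵥ fun l => V l i)
        ≤ Real.sqrt ((fun k => W k i) ⬝ᵥ fun k => W k i)
          * Real.sqrt ((fun k => V k i) ⬝ᵥ fun k => V k i) := hG _ _
      _ ≤ 1 * 1 := by
          apply mul_le_mul
          · rw [hWi, Real.sqrt_one]
          · calc Real.sqrt _ ≤ Real.sqrt 1 := Real.sqrt_le_sqrt hVi
              _ = 1 := Real.sqrt_one
          · exact Real.sqrt_nonneg _
          · norm_num
      _ = 1 := by norm_num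
  calc s i * (Wᵀ * G * V) i i ≤ s i * 1 := by
        apply mul_le_mul_of_nonneg_left hb (hs i)
    _ = s i := mul_one _

end SVD
section Subdiff
open Matrix
variable {a b : ℕ}

lemma nsubdiff_props {X Y : Matrix (Fin a) (Fin b) ℝ} (hY : Y ∈ nsubdiff X) :
    finner Y X = nuclearNorm X ∧ ∀ W, finner Y W ≤ nuclearNorm W := by
  have h0 := hY 0
  rw [finner_sub_right, finner_zero_right, nuclearNorm_zero] at h0
  have hXle : nuclearNorm X ≤ finner Y X := by linarith
  have hle : ∀ W, finner Y W ≤ nuclearNorm W := by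
    intro Wm
    by_contra hcon
    push_neg at hcon
    set δ : ℝ := finner Y Wm - nuclearNorm Wm with hδ
    have hδpos : 0 < δ := by simp [hδ]; linarith
    set C : ℝ := finner Y X - nuclearNorm X with hC
    have hCnn : 0 ≤ C := by simp [hC]; linarith
    set t : ℝ := (C + 1) / δ with ht
    have htpos : 0 < t := by positivity
    have key := hY (t • Wm)
    rw [finner_sub_right, finner_smul_right, nuclearNorm_smul _ (le_of_lt htpos)] at key
    have htδ : t * δ = C + 1 := by
      rw [ht]; field_simp
    nlinarith [key, htδ]
  exact ⟨le_antisymm (hle X) hXle, hle⟩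

lemma contract_of_pair {G : Matrix (Fin a) (Fin b) ℝ}
    (hG : ∀ (u : Fin a → ℝ) (v : Fin b → ℝ),
      u ⬝ᵥ (G *ᵥ v) ≤ Real.sqrt (u ⬝ᵥ u) * Real.sqrt (v ⬝ᵥ v)) (v : Fin b → ℝ) :
    (G *ᵥ v) ⬝ᵥ (G *ᵥ v) ≤ v ⬝ᵥ v := by
  set y := G *ᵥ v with hy
  have h := hG y v
  by_cases hyz : y ⬝ᵥ y = 0
  · rw [hyz]; exact dot_self_nonneg v
  · have hy0 : 0 < y ⬝ᵥ y := lt_of_le_of_ne (dot_self_nonneg y) (Ne.symm hyz)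
    have hsy : 0 < Real.sqrt (y ⬝ᵥ y) := Real.sqrt_pos.mpr hy0
    have h2 : Real.sqrt (y ⬝ᵥ y) ≤ Real.sqrt (v ⬝ᵥ v) := by
      have h3 : Real.sqrt (y ⬝ᵥ y) * Real.sqrt (y ⬝ᵥ y) ≤ Real.sqrt (y ⬝ᵥ y)
          * Real.sqrt (v ⬝ᵥ v) := by
        rw [Real.mul_self_sqrt (dot_self_nonneg y)]; exact h
      exact le_of_mul_le_mul_left h3 hsy
    calc y ⬝ᵥ y = Real.sqrt (y ⬝ᵥ y) * Real.sqrt (y ⬝ᵥ y) :=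
          (Real.mul_self_sqrt (dot_self_nonneg y)).symm
      _ ≤ Real.sqrt (v ⬝ᵥ v) * Real.sqrt (v ⬝ᵥ v) := by
          apply mul_le_mul h2 h2 (Real.sqrt_nonneg _) (Real.sqrt_nonneg _)
      _ = v ⬝ᵥ v := Real.mul_self_sqrt (dot_self_nonneg v)

lemma eq_of_pair_eq {G : Matrix (Fin a) (Fin b) ℝ}
    (hG : ∀ (u : Fin a → ℝ) (v : Fin b → ℝ),
      u ⬝ᵥ (G *ᵥ v) ≤ Real.sqrt (u ⬝ᵥ u) * Real.sqrt (v ⬝ᵥ v))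
    {u : Fin a → ℝ} {v : Fin b → ℝ} (huu : u ⬝ᵥ u = 1) (hvv : v ⬝ᵥ v ≤ 1)
    (h1 : u ⬝ᵥ (G *ᵥ v) = 1) : G *ᵥ v = u := by
  set y := G *ᵥ v with hy
  have hyy : y ⬝ᵥ y ≤ 1 := le_trans (contract_of_pair hG v) hvv
  have hexp : (y - u) ⬝ᵥ (y - u) = y ⬝ᵥ y - 2 * (u ⬝ᵥ y) + u ⬝ᵥ u := by
    rw [sub_dotProduct, dotProduct_sub, dotProduct_sub, dotProduct_comm u y]
    ring
  have huy : u ⬝ᵥ y = 1 := h1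
  have hz : (y - u) ⬝ᵥ (y - u) ≤ 0 := by rw [hexp, huy, huu]; linarith
  have hz2 : (y - u) ⬝ᵥ (y - u) = 0 := le_antisymm hz (dot_self_nonneg _)
  have := dotProduct_self_eq_zero.mp hz2
  exact sub_eq_zero.mp this

lemma intrinsic_forward {E : Type*} [AddCommGroup E] [Module ℝ E] [TopologicalSpace E]
    [IsTopologicalAddGroup E] [ContinuousSMul ℝ E] {s : Set E} {y g : E}
    (hy : y ∈ intrinsicInterior ℝ s) (hg : g ∈ s) :
    ∃ ε : ℝ, 0 < ε ∧ y + ε • (y - g) ∈ s := by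
  obtain ⟨y', hy', hyy⟩ := hy
  have hyspan : y ∈ affineSpan ℝ s := hyy ▸ y'.2
  have hgspan : g ∈ affineSpan ℝ s := subset_affineSpan ℝ s hg
  have hmem : ∀ t : ℝ, y + t • (y - g) ∈ affineSpan ℝ s := by
    intro t
    have h2 := AffineSubspace.smul_vsub_vadd_mem (affineSpan ℝ s) t hyspan hgspan hyspan
    simpa [vsub_eq_sub, vadd_eq_add, add_comm] using h2
  set c : ℝ → affineSpan ℝ s := fun t => ⟨y + t • (y - g), hmem t⟩ with hc
  have hcont : Continuous c := by
    apply Continuous.subtype_mk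
    fun_prop
  have h0 : c 0 ∈ interior ((↑) ⁻¹' s : Set <| affineSpan ℝ s) := by
    have he : c 0 = y' := Subtype.ext (by simp [hc, hyy])
    rw [he]; exact hy'
  have hopen : IsOpen (c ⁻¹' interior ((↑) ⁻¹' s : Set <| affineSpan ℝ s)) :=
    isOpen_interior.preimage hcont
  rcases Metric.isOpen_iff.mp hopen 0 h0 with ⟨δ, hδ, hball⟩
  refine ⟨δ/2, by linarith, ?_⟩
  have hin : c (δ/2) ∈ interior ((↑) ⁻¹' s : Set <| affineSpan ℝ s) := by
    apply hball
    simp only [Metric.mem_ball, Real.dist_eq, sub_zero]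
    rw [abs_of_pos (by linarith : (0:ℝ) < δ/2)]
    linarith
  have hfin : c (δ/2) ∈ ((↑) ⁻¹' s : Set <| affineSpan ℝ s) := interior_subset hin
  exact hfin

end Subdiff
section Perturb
open Matrix

lemma psd_perturb {r : ℕ} (d : Fin r → ℝ) (hd : ∀ i, 0 < d i) (A : Matrix (Fin r) (Fin r) ℝ)
    (hA : Aᵀ = A) :
    ∃ t : ℝ, 0 < t ∧ (Matrix.diagonal d + t • A).PosSemidef
      ∧ (Matrix.diagonal d - t • A).PosSemidef := by
  have herm : ∀ t : ℝ, (Matrix.diagonal d + t • A).IsHermitian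
      ∧ (Matrix.diagonal d - t • A).IsHermitian := by
    intro t
    constructor <;>
    · unfold Matrix.IsHermitian
      rw [Matrix.conjTranspose_eq_transpose_of_trivial]
      first
      | rw [Matrix.transpose_add, Matrix.transpose_smul, Matrix.diagonal_transpose, hA]
      | rw [Matrix.transpose_sub, Matrix.transpose_smul, Matrix.diagonal_transpose, hA]
  rcases Nat.eq_zero_or_pos r with hr | hr
  · refine ⟨1, one_pos, Matrix.PosSemidef.of_dotProduct_mulVec_nonneg (herm 1).1 fun x => ?_,
      Matrix.PosSemidef.of_dotProduct_mulVec_nonneg (herm 1).2 fun x => ?_⟩ <;>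
    · subst hr
      simp [dotProduct]
  · haveI : Nonempty (Fin r) := ⟨⟨0, hr⟩⟩
    set m : ℝ := Finset.univ.inf' Finset.univ_nonempty d with hm
    have hmpos : 0 < m := (Finset.lt_inf'_iff _).mpr (fun i _ => hd i)
    have hmle : ∀ i, m ≤ d i := fun i => Finset.inf'_le _ (Finset.mem_univ i)
    set c : ℝ := ∑ i, ∑ j, |A i j| with hc
    have hcnn : 0 ≤ c := Finset.sum_nonneg fun i _ => Finset.sum_nonneg fun j _ => abs_nonneg _
    set t : ℝ := m / (c + 1) with ht
    have htpos : 0 < t := by positivity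
    have htc : t * c ≤ m := by
      rw [ht, div_mul_eq_mul_div, div_le_iff₀ (by linarith)]
      nlinarith
    have hquad : ∀ x : Fin r → ℝ, |x ⬝ᵥ (A *ᵥ x)| ≤ c * (∑ k, x k ^ 2) := by
      intro x
      set S : ℝ := ∑ k, x k ^ 2 with hS
      have hSnn : 0 ≤ S := Finset.sum_nonneg fun k _ => sq_nonneg _
      have hxk : ∀ k, x k ^ 2 ≤ S :=
        fun k => Finset.single_le_sum (fun k _ => sq_nonneg (x k)) (Finset.mem_univ k)
      have h1 : x ⬝ᵥ (A *ᵥ x) = ∑ i, ∑ j, x i * (A i j * x j) := by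
        simp [dotProduct, Matrix.mulVec, Finset.mul_sum]
      rw [h1]
      calc |∑ i, ∑ j, x i * (A i j * x j)| ≤ ∑ i, |∑ j, x i * (A i j * x j)| :=
            Finset.abs_sum_le_sum_abs _ _
        _ ≤ ∑ i, ∑ j, |x i * (A i j * x j)| :=
            Finset.sum_le_sum fun i _ => Finset.abs_sum_le_sum_abs _ _
        _ ≤ ∑ i, ∑ j, |A i j| * S := by
            apply Finset.sum_le_sum; intro i _
            apply Finset.sum_le_sum; intro j _
            rw [abs_mul, abs_mul]
            have hxx : |x i| * |x j| ≤ S := by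
              have h2 : |x i| * |x j| ≤ (x i ^ 2 + x j ^ 2) / 2 := by
                nlinarith [sq_nonneg (|x i| - |x j|), sq_abs (x i), sq_abs (x j)]
              have := hxk i; have := hxk j
              linarith
            calc |x i| * (|A i j| * |x j|) = |A i j| * (|x i| * |x j|) := by ring
              _ ≤ |A i j| * S := mul_le_mul_of_nonneg_left hxx (abs_nonneg _)
        _ = c * S := by rw [hc, Finset.sum_mul]; apply Finset.sum_congr rfl; intro i _
                        rw [Finset.sum_mul]
    have hdiagdot : ∀ x : Fin r → ℝ, m * (∑ k, x k ^ 2) ≤ x ⬝ᵥ (Matrix.diagonal d *ᵥ x) := by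
      intro x
      have h1 : x ⬝ᵥ (Matrix.diagonal d *ᵥ x) = ∑ k, d k * x k ^ 2 := by
        simp [dotProduct, Matrix.mulVec_diagonal, pow_two]
        apply Finset.sum_congr rfl; intro k _; ring
      rw [h1, Finset.mul_sum]
      apply Finset.sum_le_sum; intro k _
      exact mul_le_mul_of_nonneg_right (hmle k) (sq_nonneg _)
    have hbound : ∀ x : Fin r → ℝ, ∀ σ : ℝ, σ = 1 ∨ σ = -1 →
        0 ≤ x ⬝ᵥ ((Matrix.diagonal d + (σ * t) • A) *ᵥ x) := by
      intro x σ hσ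
      rw [Matrix.add_mulVec, dotProduct_add, Matrix.smul_mulVec, dotProduct_smul,
        smul_eq_mul]
      have h2 := hquad x
      have h3 := hdiagdot x
      have hSnn : (0:ℝ) ≤ ∑ k, x k ^ 2 := Finset.sum_nonneg fun k _ => sq_nonneg _
      have habs : |σ * t * (x ⬝ᵥ (A *ᵥ x))| ≤ t * (c * (∑ k, x k ^ 2)) := by
        rw [abs_mul, abs_mul]
        rcases hσ with h | h <;>
          simp [h, abs_of_pos htpos] <;>
          exact mul_le_mul_of_nonneg_left h2 (le_of_lt htpos)
      have h4 : -(t * (c * (∑ k, x k ^ 2))) ≤ σ * t * (x ⬝ᵥ (A *ᵥ x)) := neg_le_of_abs_le habs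
      have h5 : t * (c * (∑ k, x k ^ 2)) ≤ m * (∑ k, x k ^ 2) := by
        rw [← mul_assoc]
        exact mul_le_mul_of_nonneg_right htc hSnn
      linarith
    refine ⟨t, htpos, Matrix.PosSemidef.of_dotProduct_mulVec_nonneg (herm t).1 fun x => ?_,
        Matrix.PosSemidef.of_dotProduct_mulVec_nonneg (herm t).2 fun x => ?_⟩
    · have := hbound x 1 (Or.inl rfl)
      rw [one_mul] at this
      simpa using this
    · have := hbound x (-1) (Or.inr rfl)
      rw [neg_one_mul, neg_smul, ← sub_eq_add_neg] at this
      simpa using this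

end Perturb
section Structural
open Matrix

lemma pair_transpose {a b : ℕ} {Y : Matrix (Fin a) (Fin b) ℝ}
    (hYb : ∀ (u : Fin a → ℝ) (v : Fin b → ℝ),
      u ⬝ᵥ (Y *ᵥ v) ≤ Real.sqrt (u ⬝ᵥ u) * Real.sqrt (v ⬝ᵥ v)) :
    ∀ (u : Fin b → ℝ) (v : Fin a → ℝ),
      u ⬝ᵥ (Yᵀ *ᵥ v) ≤ Real.sqrt (u ⬝ᵥ u) * Real.sqrt (v ⬝ᵥ v) := by
  intro u v
  have hid : u ⬝ᵥ (Yᵀ *ᵥ v) = v ⬝ᵥ (Y *ᵥ u) := by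
    rw [Matrix.mulVec_transpose, dotProduct_comm, ← Matrix.dotProduct_mulVec]
  rw [hid, mul_comm]
  exact hYb v u

lemma dot_mulVec_transpose {a b : ℕ} (Y : Matrix (Fin a) (Fin b) ℝ) (u : Fin b → ℝ)
    (v : Fin a → ℝ) : u ⬝ᵥ (Yᵀ *ᵥ v) = v ⬝ᵥ (Y *ᵥ u) := by
  rw [Matrix.mulVec_transpose, dotProduct_comm, ← Matrix.dotProduct_mulVec]

lemma structural {n1 n2 r : ℕ} (Y : Matrix (Fin n1) (Fin n2) ℝ)
    (U₀ : Matrix (Fin n1) (Fin r) ℝ) (V₀ : Matrix (Fin n2) (Fin r) ℝ)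
    (hV₀ : V₀ᵀ * V₀ = 1)
    (hYb : ∀ (u : Fin n1 → ℝ) (v : Fin n2 → ℝ),
      u ⬝ᵥ (Y *ᵥ v) ≤ Real.sqrt (u ⬝ᵥ u) * Real.sqrt (v ⬝ᵥ v))
    (hYV : Y * V₀ = U₀) (hYU : Yᵀ * U₀ = V₀)
    (hstrict : ∀ w : Fin n2 → ℝ, V₀ᵀ *ᵥ w = 0 → Yᵀ *ᵥ (Y *ᵥ w) = w → w = 0)
    (X : Matrix (Fin n1) (Fin n2) ℝ) (hX : finner Y X = nuclearNorm X) :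
    ∃ A : Matrix (Fin r) (Fin r) ℝ, Aᵀ = A ∧ X = U₀ * A * V₀ᵀ := by
  obtain ⟨W, V, s, hs, hW1, hWW, hVV, hZ, hnn⟩ := exists_svd X
  have hfe : finner Y X = ∑ i, s i * ((Wᵀ * Y * V) i i) := by
    rw [hZ] at hX ⊢
    exact finner_diag_expand Y W s V
  have hwis : ∀ i, (fun k => W k i) ⬝ᵥ (fun k => W k i) = 1 := by
    intro i; rw [← col_dot, hW1, Matrix.one_apply_eq]
  have hvile : ∀ i, (fun k => V k i) ⬝ᵥ (fun k => V k i) ≤ 1 := by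
    intro i; rw [← col_dot, hVV, Matrix.diagonal_apply_eq]
    by_cases hsi : s i = 0 <;> simp [hsi]
  have hti : ∀ i, (Wᵀ * Y * V) i i ≤ 1 := by
    intro i
    rw [triple_entry]
    calc (fun k => W k i) ⬝ᵥ (Y *ᵥ fun l => V l i)
        ≤ Real.sqrt ((fun k => W k i) ⬝ᵥ fun k => W k i)
          * Real.sqrt ((fun k => V k i) ⬝ᵥ fun k => V k i) := hYb _ _
      _ ≤ 1 * 1 := by
          apply mul_le_mul
          · rw [hwis i, Real.sqrt_one]
          · calc Real.sqrt _ ≤ Real.sqrt 1 := Real.sqrt_le_sqrt (hvile i)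
              _ = 1 := Real.sqrt_one
          · exact Real.sqrt_nonneg _
          · norm_num
      _ = 1 := by norm_num
  have hteq : ∀ i, s i ≠ 0 → (Wᵀ * Y * V) i i = 1 := by
    have hzero : ∑ i, s i * (1 - (Wᵀ * Y * V) i i) = 0 := by
      have : ∑ i, s i * (1 - (Wᵀ * Y * V) i i)
          = (∑ i, s i) - ∑ i, s i * ((Wᵀ * Y * V) i i) := by
        rw [← Finset.sum_sub_distrib]
        apply Finset.sum_congr rfl; intro i _; ring
      rw [this, ← hnn, ← hfe, hX, hnn]
      ring
    intro i hsi
    have hterm := (Finset.sum_eq_zero_iff_of_nonneg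
      (fun j _ => mul_nonneg (hs j) (by linarith [hti j]))).mp hzero i (Finset.mem_univ i)
    rcases mul_eq_zero.mp hterm with h | h
    · exact absurd h hsi
    · linarith
  -- the column relations
  set p : Fin n1 → (Fin r → ℝ) := fun i => V₀ᵀ *ᵥ (fun k => V k i) with hp
  have hcols : ∀ i, s i ≠ 0 →
      (fun k => V k i) = V₀ *ᵥ p i ∧ (fun k => W k i) = U₀ *ᵥ p i := by
    intro i hsi
    set vi : Fin n2 → ℝ := fun k => V k i with hvi
    set wi : Fin n1 → ℝ := fun k => W k i with hwi
    have hvv1 : vi ⬝ᵥ vi = 1 := by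
      rw [hvi, ← col_dot, hVV, Matrix.diagonal_apply_eq, if_neg hsi]
    have hte : wi ⬝ᵥ (Y *ᵥ vi) = 1 := by
      have := hteq i hsi
      rw [triple_entry] at this
      exact this
    have hYvi : Y *ᵥ vi = wi := eq_of_pair_eq hYb (hwis i) (le_of_eq hvv1) hte
    have hYtwi : Yᵀ *ᵥ wi = vi := by
      apply eq_of_pair_eq (pair_transpose hYb) hvv1 (le_of_eq (hwis i))
      rw [dot_mulVec_transpose, hYvi]
      rw [← hYvi]
      exact hte
    have hfixv : Yᵀ *ᵥ (Y *ᵥ vi) = vi := by rw [hYvi, hYtwi]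
    set w' : Fin n2 → ℝ := vi - V₀ *ᵥ p i with hw'
    have hV₀w' : V₀ᵀ *ᵥ w' = 0 := by
      rw [hw', Matrix.mulVec_sub, Matrix.mulVec_mulVec, hV₀, Matrix.one_mulVec, hp]
      simp [hvi]
    have hYw' : Y *ᵥ w' = wi - U₀ *ᵥ p i := by
      rw [hw', Matrix.mulVec_sub, hYvi, Matrix.mulVec_mulVec, hYV]
    have hfix : Yᵀ *ᵥ (Y *ᵥ w') = w' := by
      rw [hYw', Matrix.mulVec_sub, hYtwi, Matrix.mulVec_mulVec, hYU, hw']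
    have hw0 := hstrict w' hV₀w' hfix
    have hveq : vi = V₀ *ᵥ p i := by
      have := sub_eq_zero.mp hw0
      exact this
    refine ⟨hveq, ?_⟩
    rw [← hYvi, hveq, Matrix.mulVec_mulVec, hYV]
  -- reconstruction
  have hXsum : X = ∑ i, s i • vecMulVec (fun k => W k i) (fun k => V k i) := by
    rw [hZ]
    ext k l
    rw [Matrix.sum_apply]
    rw [Matrix.mul_apply]
    simp only [Matrix.mul_diagonal, Matrix.transpose_apply, Matrix.smul_apply,
      vecMulVec_apply, smul_eq_mul]
    apply Finset.sum_congr rfl; intro i _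
    ring
  set A : Matrix (Fin r) (Fin r) ℝ := ∑ i, s i • vecMulVec (p i) (p i) with hA
  have hterm : ∀ i, s i • vecMulVec (fun k => W k i) (fun k => V k i)
      = s i • (U₀ * vecMulVec (p i) (p i) * V₀ᵀ) := by
    intro i
    by_cases hsi : s i = 0
    · rw [hsi]; simp
    · obtain ⟨hv, hw⟩ := hcols i hsi
      rw [hv, hw, _root_.mul_vecMulVec, _root_.vecMulVec_mul, Matrix.transpose_transpose]
  refine ⟨∑ i, s i • vecMulVec (p i) (p i), ?_, ?_⟩
  · rw [Matrix.transpose_sum]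
    apply Finset.sum_congr rfl; intro i _
    rw [Matrix.transpose_smul, vecMulVec_transpose]
  · rw [hXsum]
    rw [Matrix.mul_sum, Matrix.sum_mul]
    apply Finset.sum_congr rfl; intro i _
    rw [hterm i]
    rw [Matrix.mul_smul, Matrix.smul_mul]

end Structural

section Final
open Matrix

lemma finner_sub_left {a b : ℕ} (A B Y : Matrix (Fin a) (Fin b) ℝ) :
    finner (A - B) Y = finner A Y - finner B Y := by
  rw [finner_comm, finner_sub_right, finner_comm Y A, finner_comm Y B]

lemma finner_add_left {a b : ℕ} (A B Y : Matrix (Fin a) (Fin b) ℝ) :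
    finner (A + B) Y = finner A Y + finner B Y := by
  rw [finner_comm, finner_add_right, finner_comm Y A, finner_comm Y B]

lemma finner_smul_left {a b : ℕ} (A Y : Matrix (Fin a) (Fin b) ℝ) (t : ℝ) :
    finner (t • A) Y = t * finner A Y := by
  rw [finner_comm, finner_smul_right, finner_comm Y A]


/-- **Corollary (Strict Restricted Injectivity).**
Let `X₀` be an optimal solution of `min ‖X‖_* s.t. ΦX = ΦX₀` with compact SVD
`X₀ = U₀ Σ₀ V₀ᵀ`, `r = rank X₀`.
(i) If `X₀` is the unique solution then `Ker Φ ∩ U₀ S^r V₀ᵀ = {0}` (Strict Restricted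
Injectivity).
(ii) If moreover the Nondegenerate Source Condition `Im Φ* ∩ ri ∂‖X₀‖_* ≠ ∅` holds,
then Strict Restricted Injectivity implies that `X₀` is the unique solution. -/
theorem strict_restricted_injectivity (n1 n2 m r : ℕ) (hn : n1 ≤ n2)
    (Φ : Matrix (Fin n1) (Fin n2) ℝ →ₗ[ℝ] EuclideanSpace ℝ (Fin m))
    (Φadj : EuclideanSpace ℝ (Fin m) →ₗ[ℝ] Matrix (Fin n1) (Fin n2) ℝ)
    (hadj : ∀ (u : EuclideanSpace ℝ (Fin m)) (X : Matrix (Fin n1) (Fin n2) ℝ),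
      (inner ℝ (Φ X) u : ℝ) = finner (Φadj u) X)
    (X₀ : Matrix (Fin n1) (Fin n2) ℝ) (hr : X₀.rank = r)
    -- compact SVD X₀ = U₀ Σ₀ V₀ᵀ
    (U₀ : Matrix (Fin n1) (Fin r) ℝ) (V₀ : Matrix (Fin n2) (Fin r) ℝ)
    (d : Fin r → ℝ)
    (hU₀ : U₀ᵀ * U₀ = 1) (hV₀ : V₀ᵀ * V₀ = 1)
    (hd_pos : ∀ i, 0 < d i) (hd_dec : Antitone d)
    (hSVD : X₀ = U₀ * Matrix.diagonal d * V₀ᵀ)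
    -- X₀ is an optimal solution
    (hopt : ∀ X, Φ X = Φ X₀ → nuclearNorm X₀ ≤ nuclearNorm X) :
    ((∀ X, Φ X = Φ X₀ → X ≠ X₀ → nuclearNorm X₀ < nuclearNorm X) →
      (LinearMap.ker Φ : Set (Matrix (Fin n1) (Fin n2) ℝ)) ∩
        {Z | ∃ A : Matrix (Fin r) (Fin r) ℝ, Aᵀ = A ∧ Z = U₀ * A * V₀ᵀ} = {0}) ∧
    ((Set.range Φadj ∩ intrinsicInterior ℝ (nsubdiff X₀)).Nonempty →
      ((LinearMap.ker Φ : Set (Matrix (Fin n1) (Fin n2) ℝ)) ∩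
          {Z | ∃ A : Matrix (Fin r) (Fin r) ℝ, Aᵀ = A ∧ Z = U₀ * A * V₀ᵀ} = {0}) →
      (∀ X, Φ X = Φ X₀ → X ≠ X₀ → nuclearNorm X₀ < nuclearNorm X)) := by
  
  have hdnn : ∀ i, 0 ≤ d i := fun i => le_of_lt (hd_pos i)
  have hnnX₀ : nuclearNorm X₀ = ∑ i, d i := by
    rw [hSVD, nuclearNorm_conj U₀ V₀ hU₀ hV₀ (Matrix.PosSemidef.diagonal hdnn),
      Matrix.trace_diagonal]
  constructor
  · -- part (i)
    intro huniq
    ext Z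
    simp only [Set.mem_inter_iff, Set.mem_singleton_iff, SetLike.mem_coe,
      LinearMap.mem_ker, Set.mem_setOf_eq]
    constructor
    · rintro ⟨hker, A, hAs, hZA⟩
      obtain ⟨t, htpos, hpsdP, hpsdM⟩ := psd_perturb d hd_pos A hAs
      have hexpand : ∀ σ : ℝ, U₀ * (Matrix.diagonal d + σ • A) * V₀ᵀ = X₀ + σ • Z := by
        intro σ
        rw [hSVD, hZA, Matrix.mul_add, Matrix.add_mul, Matrix.mul_smul, Matrix.smul_mul]
      have hfeasP : Φ (X₀ + t • Z) = Φ X₀ := by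
        rw [map_add, LinearMap.map_smul, hker, smul_zero, add_zero]
      have hfeasM : Φ (X₀ - t • Z) = Φ X₀ := by
        rw [map_sub, LinearMap.map_smul, hker, smul_zero, sub_zero]
      have hexpandM : U₀ * (Matrix.diagonal d - t • A) * V₀ᵀ = X₀ - t • Z := by
        rw [hSVD, hZA, Matrix.mul_sub, Matrix.sub_mul, Matrix.mul_smul, Matrix.smul_mul]
      have hnP : nuclearNorm (X₀ + t • Z) = (∑ i, d i) + t * A.trace := by
        rw [← hexpand t, nuclearNorm_conj U₀ V₀ hU₀ hV₀ hpsdP, Matrix.trace_add,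
          Matrix.trace_smul, Matrix.trace_diagonal, smul_eq_mul]
      have hnM : nuclearNorm (X₀ - t • Z) = (∑ i, d i) - t * A.trace := by
        rw [← hexpandM, nuclearNorm_conj U₀ V₀ hU₀ hV₀ hpsdM, Matrix.trace_sub,
          Matrix.trace_smul, Matrix.trace_diagonal, smul_eq_mul]
      have h1 := hopt _ hfeasP
      have h2 := hopt _ hfeasM
      rw [hnnX₀] at h1 h2
      rw [hnP] at h1
      rw [hnM] at h2
      have htrA : t * A.trace = 0 := le_antisymm (by linarith) (by linarith)
      have heqP : nuclearNorm (X₀ + t • Z) = nuclearNorm X₀ := by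
        rw [hnP, htrA, hnnX₀, add_zero]
      have hXP : X₀ + t • Z = X₀ := by
        by_contra hc
        exact absurd heqP (ne_of_gt (huniq _ hfeasP hc))
      have : t • Z = 0 := by
        have := hXP
        rwa [add_eq_left] at this
      rcases smul_eq_zero.mp this with h | h
      · exact absurd h (ne_of_gt htpos)
      · exact h
    · intro hZ
      subst hZ
      refine ⟨map_zero Φ, 0, by simp, by simp⟩
  · -- part (ii)
    intro hNSC hSRI X hfeas hne
    by_contra hlt
    push_neg at hlt
    have heq : nuclearNorm X = nuclearNorm X₀ := le_antisymm hlt (hopt X hfeas)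
    obtain ⟨Y, hYrange, hYint⟩ := hNSC
    obtain ⟨uvec, huvec⟩ := hYrange
    have hYmem : Y ∈ nsubdiff X₀ := intrinsicInterior_subset hYint
    obtain ⟨hYX₀, hYle⟩ := nsubdiff_props hYmem
    have hpair : ∀ (α : Fin n1 → ℝ) (v : Fin n2 → ℝ),
        α ⬝ᵥ (Y *ᵥ v) ≤ Real.sqrt (α ⬝ᵥ α) * Real.sqrt (v ⬝ᵥ v) := by
      intro α v
      have h := hYle (vecMulVec α v)
      rwa [finner_vecMulVec_right, nuclearNorm_vecMulVec] at h
    have hker0 : ∀ Zk : Matrix (Fin n1) (Fin n2) ℝ, Φ Zk = 0 → finner Y Zk = 0 := by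
      intro Zk hZk
      rw [← huvec, ← hadj, hZk]
      exact inner_zero_left _
    -- diagonal entries of U₀ᵀ Y V₀ are all 1
    have hu0dot : ∀ i, (fun k => U₀ k i) ⬝ᵥ (fun k => U₀ k i) = 1 := by
      intro i; rw [← col_dot, hU₀, Matrix.one_apply_eq]
    have hv0dot : ∀ i, (fun k => V₀ k i) ⬝ᵥ (fun k => V₀ k i) = 1 := by
      intro i; rw [← col_dot, hV₀, Matrix.one_apply_eq]
    have htile : ∀ i, (U₀ᵀ * Y * V₀) i i ≤ 1 := by
      intro i
      rw [triple_entry]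
      calc (fun k => U₀ k i) ⬝ᵥ (Y *ᵥ fun l => V₀ l i)
          ≤ Real.sqrt ((fun k => U₀ k i) ⬝ᵥ fun k => U₀ k i)
            * Real.sqrt ((fun k => V₀ k i) ⬝ᵥ fun k => V₀ k i) := hpair _ _
        _ = 1 := by rw [hu0dot i, hv0dot i, Real.sqrt_one, mul_one]
    have hsum : ∑ i, d i * ((U₀ᵀ * Y * V₀) i i) = ∑ i, d i := by
      have h := hYX₀
      rw [hnnX₀] at h
      rw [hSVD, finner_diag_expand] at h
      exact h
    have hti1 : ∀ i, (U₀ᵀ * Y * V₀) i i = 1 := by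
      have hzero : ∑ i, d i * (1 - (U₀ᵀ * Y * V₀) i i) = 0 := by
        have he : ∑ i, d i * (1 - (U₀ᵀ * Y * V₀) i i)
            = (∑ i, d i) - ∑ i, d i * ((U₀ᵀ * Y * V₀) i i) := by
          rw [← Finset.sum_sub_distrib]
          apply Finset.sum_congr rfl; intro i _; ring
        rw [he, hsum, sub_self]
      intro i
      have hterm := (Finset.sum_eq_zero_iff_of_nonneg
        (fun j _ => mul_nonneg (hdnn j) (by linarith [htile j]))).mp hzero i
        (Finset.mem_univ i)
      rcases mul_eq_zero.mp hterm with h | h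
      · exact absurd h (ne_of_gt (hd_pos i))
      · linarith
    have hYcol : ∀ i, Y *ᵥ (fun k => V₀ k i) = (fun k => U₀ k i) := by
      intro i
      apply eq_of_pair_eq hpair (hu0dot i) (le_of_eq (hv0dot i))
      have := hti1 i
      rw [triple_entry] at this
      exact this
    have hYV : Y * V₀ = U₀ := by
      ext k i
      have := congrFun (hYcol i) k
      simpa [Matrix.mul_apply, Matrix.mulVec, dotProduct] using this
    have hYtcol : ∀ i, Yᵀ *ᵥ (fun k => U₀ k i) = (fun k => V₀ k i) := by
      intro i
      apply eq_of_pair_eq (pair_transpose hpair) (hv0dot i) (le_of_eq (hu0dot i))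
      rw [dot_mulVec_transpose]
      have := hti1 i
      rw [triple_entry] at this
      exact this
    have hYU : Yᵀ * U₀ = V₀ := by
      ext k i
      have := congrFun (hYtcol i) k
      simpa [Matrix.mul_apply, Matrix.mulVec, dotProduct] using this
    -- strictness via intrinsic interior
    have hstrict : ∀ w : Fin n2 → ℝ, V₀ᵀ *ᵥ w = 0 → Yᵀ *ᵥ (Y *ᵥ w) = w → w = 0 := by
      intro w hVw hfixw
      by_contra hwne
      have hβpos : 0 < w ⬝ᵥ w :=
        lt_of_le_of_ne (dot_self_nonneg w) (fun h => hwne (dotProduct_self_eq_zero.mp h.symm))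
      set β : ℝ := w ⬝ᵥ w with hβ
      set wb : Fin n2 → ℝ := (Real.sqrt β)⁻¹ • w with hwb
      have hsβ : 0 < Real.sqrt β := Real.sqrt_pos.mpr hβpos
      have hwbwb : wb ⬝ᵥ wb = 1 := by
        rw [hwb, smul_dotProduct, dotProduct_smul, smul_eq_mul, smul_eq_mul, ← hβ,
          ← mul_assoc]
        rw [show (Real.sqrt β)⁻¹ * (Real.sqrt β)⁻¹ * β
            = β / (Real.sqrt β * Real.sqrt β) by field_simp]
        rw [Real.mul_self_sqrt (le_of_lt hβpos)]
        field_simp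
      have hVwb : V₀ᵀ *ᵥ wb = 0 := by
        rw [hwb, Matrix.mulVec_smul, hVw, smul_zero]
      have hfixwb : Yᵀ *ᵥ (Y *ᵥ wb) = wb := by
        rw [hwb, Matrix.mulVec_smul, Matrix.mulVec_smul, hfixw]
      set u' : Fin n1 → ℝ := Y *ᵥ wb with hu'
      have hYtu' : Yᵀ *ᵥ u' = wb := hfixwb
      have hu'u' : u' ⬝ᵥ u' = 1 := by
        have h := dot_mulVec_transpose Y wb u'
        rw [hYtu'] at h
        rw [hu', ← h, hwbwb]
      have hU₀u' : U₀ᵀ *ᵥ u' = 0 := by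
        have hUY : U₀ᵀ * Y = V₀ᵀ := by
          rw [← hYU, Matrix.transpose_mul, Matrix.transpose_transpose]
        rw [hu', Matrix.mulVec_mulVec, hUY, hVwb]
      set K : Matrix (Fin n1) (Fin n2) ℝ := vecMulVec u' wb with hK
      set Y' : Matrix (Fin n1) (Fin n2) ℝ := Y - (2:ℝ) • K with hY'
      -- contraction for Y'
      have hY'contr : ∀ v : Fin n2 → ℝ, (Y' *ᵥ v) ⬝ᵥ (Y' *ᵥ v) ≤ v ⬝ᵥ v := by
        intro v
        set c : ℝ := wb ⬝ᵥ v with hc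
        set v' : Fin n2 → ℝ := v - c • wb with hv'
        have hv'wb : v' ⬝ᵥ wb = 0 := by
          rw [hv', sub_dotProduct, smul_dotProduct, hwbwb, dotProduct_comm, ← hc]
          simp
        have hYv'u' : (Y *ᵥ v') ⬝ᵥ u' = 0 := by
          have h := dot_mulVec_transpose Y v' u'
          rw [hYtu'] at h
          rw [dotProduct_comm, ← h, hv'wb]
        have hYv : Y *ᵥ v = Y *ᵥ v' + c • u' := by
          rw [hv', Matrix.mulVec_sub, Matrix.mulVec_smul, hu']
          abel
        have hY'v : Y' *ᵥ v = Y *ᵥ v' - c • u' := by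
          rw [hY', Matrix.sub_mulVec, Matrix.smul_mulVec, hK, vecMulVec_dot, ← hc,
            hYv, smul_smul]
          rw [show (2:ℝ) * c = c + c by ring]
          rw [add_smul]
          abel
        have hcomm : u' ⬝ᵥ (Y *ᵥ v') = 0 := by
          rw [dotProduct_comm]; exact hYv'u'
        have hexp1 : (Y *ᵥ v' + c • u') ⬝ᵥ (Y *ᵥ v' + c • u')
            = (Y *ᵥ v') ⬝ᵥ (Y *ᵥ v') + c * c := by
          simp only [add_dotProduct, dotProduct_add, smul_dotProduct, dotProduct_smul,
            smul_eq_mul, hYv'u', hcomm, hu'u']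
          ring
        have hexp2 : (Y *ᵥ v' - c • u') ⬝ᵥ (Y *ᵥ v' - c • u')
            = (Y *ᵥ v') ⬝ᵥ (Y *ᵥ v') + c * c := by
          simp only [sub_dotProduct, dotProduct_sub, smul_dotProduct, dotProduct_smul,
            smul_eq_mul, hYv'u', hcomm, hu'u']
          ring
        calc (Y' *ᵥ v) ⬝ᵥ (Y' *ᵥ v) = (Y *ᵥ v') ⬝ᵥ (Y *ᵥ v') + c * c := by
              rw [hY'v, hexp2]
          _ = (Y *ᵥ v) ⬝ᵥ (Y *ᵥ v) := by rw [hYv, hexp1]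
          _ ≤ v ⬝ᵥ v := contract_of_pair hpair v
      have hY'pair : ∀ (α : Fin n1 → ℝ) (v : Fin n2 → ℝ),
          α ⬝ᵥ (Y' *ᵥ v) ≤ Real.sqrt (α ⬝ᵥ α) * Real.sqrt (v ⬝ᵥ v) := by
        intro α v
        calc α ⬝ᵥ (Y' *ᵥ v)
            ≤ Real.sqrt (α ⬝ᵥ α) * Real.sqrt ((Y' *ᵥ v) ⬝ᵥ (Y' *ᵥ v)) := dot_cs _ _
          _ ≤ Real.sqrt (α ⬝ᵥ α) * Real.sqrt (v ⬝ᵥ v) := by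
              apply mul_le_mul_of_nonneg_left (Real.sqrt_le_sqrt (hY'contr v))
                (Real.sqrt_nonneg _)
      have hX₀wb : X₀ *ᵥ wb = 0 := by
        rw [hSVD, ← Matrix.mulVec_mulVec, hVwb]
        simp
      have hY'X₀ : finner Y' X₀ = nuclearNorm X₀ := by
        rw [hY', finner_sub_left, finner_smul_left, finner_comm K, hK,
          finner_vecMulVec_right, hX₀wb]
        simp [hYX₀]
      have hY'mem : Y' ∈ nsubdiff X₀ := by
        intro Zc
        rw [finner_sub_right, hY'X₀]
        have := ball_finner_le hY'pair Zc
        linarith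
      obtain ⟨ε, hε, hin⟩ := intrinsic_forward hYint hY'mem
      have hYdiff : Y - Y' = (2:ℝ) • K := by rw [hY']; abel
      have hnew := hin (X₀ + K)
      rw [add_sub_cancel_left] at hnew
      have hfinYK : finner Y K = 1 := by
        rw [hK, finner_vecMulVec_right, ← hu', hu'u']
      have hfinKK : finner K K = 1 := by
        rw [hK, finner_vecMulVec_right, vecMulVec_dot, hwbwb, one_smul, hu'u']
      have hLHS : finner (Y + ε • (Y - Y')) K = 1 + 2 * ε := by
        rw [hYdiff, finner_add_left, finner_smul_left, finner_smul_left, hfinYK, hfinKK]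
        ring
      have hRHS : nuclearNorm (X₀ + K) = nuclearNorm X₀ + 1 := by
        rw [hSVD, hK, nuclearNorm_spike U₀ V₀ hU₀ hV₀ d hdnn u' wb hu'u' hwbwb hU₀u' hVwb,
          ← hSVD, hnnX₀]
      rw [hLHS, hRHS] at hnew
      linarith
    -- apply the structural lemma
    have hXfin : finner Y X = nuclearNorm X := by
      have hkk : Φ (X - X₀) = 0 := by rw [map_sub, hfeas, sub_self]
      have h0 := hker0 _ hkk
      rw [finner_sub_right] at h0
      rw [heq]
      linarith [hYX₀, h0]
    obtain ⟨A, hAs, hXA⟩ := structural Y U₀ V₀ hV₀ hpair hYV hYU hstrict X hXfin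
    set Zd : Matrix (Fin n1) (Fin n2) ℝ := X - X₀ with hZd
    have hZdform : Zd = U₀ * (A - Matrix.diagonal d) * V₀ᵀ := by
      rw [hZd, hXA, hSVD, Matrix.mul_sub, Matrix.sub_mul]
    have hZdsym : (A - Matrix.diagonal d)ᵀ = A - Matrix.diagonal d := by
      rw [Matrix.transpose_sub, hAs, Matrix.diagonal_transpose]
    have hZdker : Φ Zd = 0 := by rw [hZd, map_sub, hfeas, sub_self]
    have hZdmem : Zd ∈ (LinearMap.ker Φ : Set (Matrix (Fin n1) (Fin n2) ℝ)) ∩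
        {Z | ∃ A : Matrix (Fin r) (Fin r) ℝ, Aᵀ = A ∧ Z = U₀ * A * V₀ᵀ} := by
      exact ⟨by simpa [LinearMap.mem_ker] using hZdker, ⟨A - Matrix.diagonal d, hZdsym, hZdform⟩⟩
    rw [hSRI] at hZdmem
    have : Zd = 0 := hZdmem
    exact hne (by rw [← sub_eq_zero]; exact this)
end Final
end
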